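/- arXiv:1705.05243 — 7 statements merged into one kernel-verified Lean document; each statement's English description precedes it below -/
import Mathlib

section
/- Let e and f be μ-important edges of C, and let g be an edge of C such that both endpoints of e lie in one connected component of C − g and both endpoints of f lie in the other connected component of C − g. Then g is μ-important. (Consequently, the μ-important edges of C, together with their endpoints, form a subtree of C.) -/
/-- The set of labels carried by a set `S` of vertices. -/
def labelSet {V M : Type*} (L : V → Set M) (S : Set V) : Set M :=
  ⋃ v ∈ S, L v

/-- The connected component of `u` in the graph `C` with the edge `s(u, v)` deleted.
For a tree `C` and an edge `uv`, `edgeSide C u v` and `edgeSide C v u` are the two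
connected components of `C − uv`. -/
def edgeSide {V : Type*} (C : SimpleGraph V) (u v : V) : Set V :=
  {w | (C.deleteEdges {s(u, v)}).Reachable u w}

/-- The edge `uv` of `C` is `μ`-important: for each of the two components `K` of `C − uv`,
the label set of `K` properly contains `{μ}`. -/
def ImportantEdge {V M : Type*} (C : SimpleGraph V) (L : V → Set M) (μ : M) (u v : V) :
    Prop :=
  C.Adj u v ∧
    (μ ∈ labelSet L (edgeSide C u v) ∧ labelSet L (edgeSide C u v) ≠ {μ}) ∧
    (μ ∈ labelSet L (edgeSide C v u) ∧ labelSet L (edgeSide C v u) ≠ {μ})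

/-- The graph `C` with the vertex `v` deleted (all edges incident to `v` removed). -/
def delVertex {V : Type*} (C : SimpleGraph V) (v : V) : SimpleGraph V :=
  C.deleteEdges {e : Sym2 V | v ∈ e}

/-- The connected component of `w` in `C − v`. -/
def vertComp {V : Type*} (C : SimpleGraph V) (v w : V) : Set V :=
  {x | (delVertex C v).Reachable w x}

/-- The vertex `v` of `C` is `μ`-important: every connected component `T` of `C − v`
has label set equal to `{μ}` or not containing `μ` at all. -/
def ImportantVertex {V M : Type*} (C : SimpleGraph V) (L : V → Set M) (μ : M) (v : V) :
    Prop :=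
  ∀ w : V, w ≠ v →
    labelSet L (vertComp C v w) = {μ} ∨ μ ∉ labelSet L (vertComp C v w)

lemma walk_closed {V : Type*} {C : SimpleGraph V} (A : Set V)
    (h : ∀ x y, C.Adj x y → x ∈ A → y ∈ A) {a w : V} (p : C.Walk a w)
    (ha : a ∈ A) : w ∈ A := by
  induction p with
  | nil => exact ha
  | cons adj _ ih => exact ih (h _ _ adj ha)

lemma not_reach_del {V : Type*} {C : SimpleGraph V} (hC : C.IsAcyclic) {u v : V}
    (h : C.Adj u v) : ¬ (C.deleteEdges {s(u,v)}).Reachable u v :=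
  ((SimpleGraph.isBridge_iff).mp ((SimpleGraph.isAcyclic_iff_forall_adj_isBridge.mp hC) h))

lemma edgeSide_swap_graph {V : Type*} (C : SimpleGraph V) (u v : V) :
    C.deleteEdges {s(u,v)} = C.deleteEdges {s(v,u)} := by rw [Sym2.eq_swap]

lemma mem_side_union {V : Type*} {C : SimpleGraph V} (hc : C.Connected) (u v : V)
    (w : V) : w ∈ edgeSide C u v ∪ edgeSide C v u := by
  obtain ⟨p⟩ := hc.preconnected u w
  refine walk_closed (edgeSide C u v ∪ edgeSide C v u) ?_ p
    (Or.inl (SimpleGraph.Reachable.refl u))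
  rintro x y hxy (hx | hx)
  · by_cases hs : s(x,y) = s(u,v)
    · rw [Sym2.eq_iff] at hs
      rcases hs with ⟨rfl, rfl⟩ | ⟨rfl, rfl⟩
      · exact Or.inr (SimpleGraph.Reachable.refl _)
      · exact Or.inl (SimpleGraph.Reachable.refl _)
    · exact Or.inl (hx.trans (SimpleGraph.Adj.reachable (by simp [hs, hxy])))
  · by_cases hs : s(x,y) = s(v,u)
    · rw [Sym2.eq_iff] at hs
      rcases hs with ⟨rfl, rfl⟩ | ⟨rfl, rfl⟩
      · exact Or.inl (SimpleGraph.Reachable.refl _)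
      · exact Or.inr (SimpleGraph.Reachable.refl _)
    · exact Or.inr (hx.trans (SimpleGraph.Adj.reachable (by simp [hs, hxy])))

lemma side_subset {V : Type*} {C : SimpleGraph V} {e₁ e₂ g₁ g₂ : V}
    (he : e₁ ∈ edgeSide C g₁ g₂) (hgout : g₂ ∉ edgeSide C e₁ e₂) :
    edgeSide C e₁ e₂ ⊆ edgeSide C g₁ g₂ := by
  intro w hw
  obtain ⟨p⟩ := hw
  have key := walk_closed (A := edgeSide C e₁ e₂ ∩ edgeSide C g₁ g₂) ?_ p
    ⟨SimpleGraph.Reachable.refl _, he⟩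
  · exact key.2
  · rintro x y hxy ⟨hx1, hx2⟩
    have hy1 : y ∈ edgeSide C e₁ e₂ := hx1.trans hxy.reachable
    refine ⟨hy1, ?_⟩
    by_cases hs : s(x,y) = s(g₁,g₂)
    · rw [Sym2.eq_iff] at hs
      rcases hs with ⟨rfl, rfl⟩ | ⟨rfl, rfl⟩
      · exact absurd hy1 hgout
      · exact absurd hx1 hgout
    · have hxy' : C.Adj x y := (SimpleGraph.deleteEdges_adj.mp hxy).1
      exact hx2.trans (SimpleGraph.Adj.reachable (by simp [hs, hxy']))

lemma labelSet_mono {V M : Type*} (L : V → Set M) {A B : Set V} (h : A ⊆ B) :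
    labelSet L A ⊆ labelSet L B :=
  Set.biUnion_subset_biUnion_left h

lemma transfer {M : Type*} {A B : Set M} {μ : M} (hsub : A ⊆ B) (h1 : μ ∈ A)
    (h2 : A ≠ {μ}) : μ ∈ B ∧ B ≠ {μ} := by
  refine ⟨hsub h1, ?_⟩
  obtain ⟨x, hx, hxμ⟩ : ∃ x ∈ A, x ≠ μ := by
    by_contra hc
    push_neg at hc
    exact h2 (Set.eq_singleton_iff_unique_mem.mpr ⟨h1, hc⟩)
  intro hB
  exact hxμ (by simpa [hB] using hsub hx)

/-- If `e` and `f` are `μ`-important edges of the finite tree `C`, and `g` is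
an edge of `C` such that both endpoints of `e` lie in one component of `C − g` and both
endpoints of `f` lie in the other, then `g` is `μ`-important. -/
theorem statement_2 {V M : Type*} [Fintype V] (C : SimpleGraph V) (hC : C.IsTree)
    (L : V → Set M) (μ : M) (e₁ e₂ f₁ f₂ g₁ g₂ : V)
    (he : ImportantEdge C L μ e₁ e₂) (hf : ImportantEdge C L μ f₁ f₂)
    (hg : C.Adj g₁ g₂)
    (he₁ : e₁ ∈ edgeSide C g₁ g₂) (he₂ : e₂ ∈ edgeSide C g₁ g₂)
    (hf₁ : f₁ ∈ edgeSide C g₂ g₁) (hf₂ : f₂ ∈ edgeSide C g₂ g₁) :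
    ImportantEdge C L μ g₁ g₂ := by
  have hac := hC.IsAcyclic
  have hconn := hC.isConnected
  refine ⟨hg, ?_, ?_⟩
  · rcases mem_side_union hconn e₁ e₂ g₂ with h | h
    · have hnot : g₂ ∉ edgeSide C e₂ e₁ := by
        intro h'
        have h'' : (C.deleteEdges {s(e₁,e₂)}).Reachable e₂ g₂ := by
          rw [edgeSide_swap_graph C e₁ e₂]; exact h'
        exact not_reach_del hac he.1 (h.trans h''.symm)
      have hsub := side_subset he₂ hnot
      exact transfer (labelSet_mono L hsub) he.2.2.1 he.2.2.2
    · have hnot : g₂ ∉ edgeSide C e₁ e₂ := by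
        intro h'
        have h'' : (C.deleteEdges {s(e₁,e₂)}).Reachable e₂ g₂ := by
          rw [edgeSide_swap_graph C e₁ e₂]; exact h
        exact not_reach_del hac he.1 (h'.trans h''.symm)
      have hsub := side_subset he₁ hnot
      exact transfer (labelSet_mono L hsub) he.2.1.1 he.2.1.2
  · rcases mem_side_union hconn f₁ f₂ g₁ with h | h
    · have hnot : g₁ ∉ edgeSide C f₂ f₁ := by
        intro h'
        have h'' : (C.deleteEdges {s(f₁,f₂)}).Reachable f₂ g₁ := by
          rw [edgeSide_swap_graph C f₁ f₂]; exact h'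
        exact not_reach_del hac hf.1 (h.trans h''.symm)
      have hsub := side_subset hf₂ hnot
      exact transfer (labelSet_mono L hsub) hf.2.2.1 hf.2.2.2
    · have hnot : g₁ ∉ edgeSide C f₁ f₂ := by
        intro h'
        have h'' : (C.deleteEdges {s(f₁,f₂)}).Reachable f₂ g₁ := by
          rw [edgeSide_swap_graph C f₁ f₂]; exact h
        exact not_reach_del hac hf.1 (h'.trans h''.symm)
      have hsub := side_subset hf₁ hnot
      exact transfer (labelSet_mono L hsub) hf.2.1.1 hf.2.1.2
end

section
/- If the finite tree C has no μ-important edge, then C has at least one μ-important vertex. -/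
section Helpers

open SimpleGraph

variable {V : Type*} {C : SimpleGraph V}

lemma not_mem_edgeSide (hC : C.IsTree) {u v : V} (h : C.Adj u v) : v ∉ edgeSide C u v := by
  have hb := (isAcyclic_iff_forall_adj_isBridge.mp hC.IsAcyclic) h
  exact (isBridge_iff.mp hb)

lemma reachable_delVertex {H : SimpleGraph V} (hH : H ≤ C) {v a b : V} (q : H.Walk a b)
    (hv : v ∉ q.support) : (delVertex C v).Reachable a b := by
  refine ⟨q.transfer (delVertex C v) ?_⟩
  intro e he
  rw [delVertex, edgeSet_deleteEdges]
  refine ⟨edgeSet_mono hH (q.edges_subset_edgeSet he), ?_⟩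
  induction e using Sym2.ind with
  | _ a' b' =>
    intro hmem
    rcases Sym2.mem_iff.mp hmem with rfl | rfl
    · exact hv (q.fst_mem_support_of_mem_edges he)
    · exact hv (q.snd_mem_support_of_mem_edges he)

lemma reachable_deleteEdge {H : SimpleGraph V} (hH : H ≤ C) {u v a b : V} (q : H.Walk a b)
    (hu : u ∉ q.support) : (C.deleteEdges {s(u, v)}).Reachable a b := by
  refine ⟨q.transfer _ ?_⟩
  intro e he
  rw [edgeSet_deleteEdges]
  refine ⟨edgeSet_mono hH (q.edges_subset_edgeSet he), ?_⟩
  intro hmem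
  rw [Set.mem_singleton_iff] at hmem
  subst hmem
  exact hu (q.fst_mem_support_of_mem_edges he)

lemma edgeSide_eq_vertComp (hC : C.IsTree) {u v : V} (h : C.Adj u v) :
    edgeSide C u v = vertComp C v u := by
  classical
  ext x
  constructor
  · rintro ⟨p⟩
    by_cases hv : v ∈ p.support
    · exact absurd ⟨p.takeUntil v hv⟩ (not_mem_edgeSide hC h)
    · exact reachable_delVertex (deleteEdges_le _) p hv
  · intro hx
    refine hx.mono ?_
    intro a b hab
    rw [delVertex, deleteEdges_adj] at hab
    rw [deleteEdges_adj]
    refine ⟨hab.1, ?_⟩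
    intro hmem
    rw [Set.mem_singleton_iff] at hmem
    exact hab.2 (hmem ▸ Sym2.mem_mk_right u v)

lemma vertComp_exists_nbr (hC : C.IsTree) {v w : V} (hw : w ≠ v) :
    ∃ u, C.Adj v u ∧ vertComp C v w = vertComp C v u := by
  classical
  obtain ⟨p⟩ := hC.isConnected v w
  obtain ⟨q, hq⟩ : ∃ q : C.Walk v w, q.IsPath := ⟨p.toPath.1, p.toPath.2⟩
  clear p
  cases q with
  | nil => exact absurd rfl hw.symm
  | cons hadj q' =>
    rename_i u
    rw [Walk.cons_isPath_iff] at hq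
    have hr : (delVertex C v).Reachable u w :=
      reachable_delVertex le_rfl q' hq.2
    refine ⟨u, hadj, ?_⟩
    ext x
    exact ⟨fun hx => hr.trans hx, fun hx => hr.symm.trans hx⟩

lemma edgeSide_ssubset (hC : C.IsTree) {u v w : V} (huv : C.Adj u v) (huw : C.Adj u w)
    (hne : w ≠ v) : edgeSide C w u ⊂ edgeSide C u v := by
  classical
  constructor
  · rintro x ⟨p⟩
    have hu : u ∉ p.support := by
      intro hu
      exact absurd ⟨p.takeUntil u hu⟩ (not_mem_edgeSide hC huw.symm)
    have hwx : (C.deleteEdges {s(u, v)}).Reachable w x :=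
      reachable_deleteEdge (deleteEdges_le _) p hu
    refine Reachable.trans ⟨Walk.cons ?_ Walk.nil⟩ hwx
    rw [deleteEdges_adj]
    refine ⟨huw, ?_⟩
    intro hmem
    rw [Set.mem_singleton_iff, Sym2.eq_iff] at hmem
    rcases hmem with ⟨-, rfl⟩ | ⟨rfl, -⟩
    · exact hne rfl
    · exact huv.ne rfl
  · intro hsub
    exact (not_mem_edgeSide hC huw.symm) (hsub (Reachable.refl u))

end Helpers

/-- If the finite tree `C` has no `μ`-important edge, then it has at least
one `μ`-important vertex. -/
theorem statement_3 {V M : Type*} [Fintype V] (C : SimpleGraph V) (hC : C.IsTree)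
    (L : V → Set M) (μ : M)
    (hnoedge : ∀ u v : V, ¬ ImportantEdge C L μ u v) :
    ∃ v : V, ImportantVertex C L μ v := by
  classical
  set Heavy : V → V → Prop := fun a b =>
    C.Adj a b ∧ μ ∈ labelSet L (edgeSide C a b) ∧ labelSet L (edgeSide C a b) ≠ {μ}
    with hHeavy
  have key : ∀ v : V, (∀ z : V, ¬ Heavy z v) → ImportantVertex C L μ v := by
    intro v hv w hw
    obtain ⟨u, hadj, hcomp⟩ := vertComp_exists_nbr hC hw
    rw [hcomp, ← edgeSide_eq_vertComp hC hadj.symm]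
    by_cases hmem : μ ∈ labelSet L (edgeSide C u v)
    · left
      by_contra hne
      exact hv u ⟨hadj.symm, hmem, hne⟩
    · exact Or.inr hmem
  by_cases hS : ∃ p : V × V, Heavy p.1 p.2
  · set T : Set ℕ := {n | ∃ p : V × V, Heavy p.1 p.2 ∧ (edgeSide C p.1 p.2).ncard = n}
      with hT
    have hTne : T.Nonempty := by
      obtain ⟨p, hp⟩ := hS
      exact ⟨_, p, hp, rfl⟩
    obtain ⟨p, hp, hpcard⟩ := Nat.sInf_mem hTne
    refine ⟨p.1, key p.1 ?_⟩
    intro z hz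
    by_cases hzv : z = p.2
    · subst hzv
      exact hnoedge p.1 p.2 ⟨hp.1, hp.2, hz.2⟩
    · have hss := edgeSide_ssubset hC hp.1 hz.1.symm hzv
      have hlt : (edgeSide C z p.1).ncard < (edgeSide C p.1 p.2).ncard :=
        Set.ncard_lt_ncard hss (Set.toFinite _)
      have hle : sInf T ≤ (edgeSide C z p.1).ncard :=
        Nat.sInf_le ⟨(z, p.1), hz, rfl⟩
      omega
  · push_neg at hS
    obtain ⟨v⟩ := hC.isConnected.nonempty
    exact ⟨v, key v fun z => hS (z, v)⟩
end

section
/- Let u and v be two distinct μ-important vertices of C. Then for every edge g lying on the unique path in C from u to v, and for each of the two connected components K of C − g, it is not the case that N(K) contains μ together with some label different from μ (i.e. either μ ∉ N(K) or N(K) ⊆ {μ}). In particular no edge on the path from u to v is μ-important. -/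
private lemma reach_split {V : Type*} {C : SimpleGraph V} {u v g₁ g₂ : V}
    (p : C.Walk u v) (ht : p.IsTrail) (hmem : s(g₁, g₂) ∈ p.edges) :
    ((C.deleteEdges {s(g₁, g₂)}).Reachable u g₁ ∧ (C.deleteEdges {s(g₁, g₂)}).Reachable g₂ v) ∨
    ((C.deleteEdges {s(g₁, g₂)}).Reachable u g₂ ∧ (C.deleteEdges {s(g₁, g₂)}).Reachable g₁ v) := by
  induction p with
  | nil => simp at hmem
  | @cons a b c h q ih =>
    rw [SimpleGraph.Walk.isTrail_cons] at ht
    rw [SimpleGraph.Walk.edges_cons, List.mem_cons] at hmem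
    rcases hmem with heq | hmem
    · have hq : (C.deleteEdges {s(g₁, g₂)}).Reachable b c := by
        refine ⟨q.toDeleteEdges _ ?_⟩
        intro e he hes
        rw [Set.mem_singleton_iff] at hes
        rw [hes, heq] at he
        exact ht.2 he
      rw [Sym2.eq_iff] at heq
      rcases heq with ⟨h1, h2⟩ | ⟨h1, h2⟩
      · subst h1; subst h2; exact Or.inl ⟨SimpleGraph.Reachable.refl _, hq⟩
      · subst h1; subst h2; exact Or.inr ⟨SimpleGraph.Reachable.refl _, hq⟩
    · have hne : s(a, b) ≠ s(g₁, g₂) := fun hh => ht.2 (hh ▸ hmem)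
      have hadj : (C.deleteEdges {s(g₁, g₂)}).Adj a b :=
        SimpleGraph.deleteEdges_adj.mpr ⟨h, by simpa using hne⟩
      rcases ih ht.1 hmem with ⟨h1, h2⟩ | ⟨h1, h2⟩
      · exact Or.inl ⟨hadj.reachable.trans h1, h2⟩
      · exact Or.inr ⟨hadj.reachable.trans h1, h2⟩

private lemma side_lemma {V M : Type*} {C : SimpleGraph V} (hC : C.IsAcyclic)
    {L : V → Set M} {μ : M} {v g₁ g₂ : V} (hadj : C.Adj g₁ g₂)
    (hv : ImportantVertex C L μ v)
    (hrv : (C.deleteEdges {s(g₁, g₂)}).Reachable g₂ v) :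
    μ ∉ labelSet L (edgeSide C g₁ g₂) ∨ labelSet L (edgeSide C g₁ g₂) ⊆ {μ} := by
  classical
  have hbridge : ¬ (C.deleteEdges {s(g₁, g₂)}).Reachable g₁ g₂ := by
    have := (SimpleGraph.isAcyclic_iff_forall_edge_isBridge.mp hC) ((SimpleGraph.mem_edgeSet C).mpr hadj)
    rw [SimpleGraph.isBridge_iff] at this
    exact this
  have hvnot : v ∉ edgeSide C g₁ g₂ := fun h => hbridge (h.trans hrv.symm)
  have hne : g₁ ≠ v := by
    rintro rfl
    exact hvnot (SimpleGraph.Reachable.refl _)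
  have hsub : edgeSide C g₁ g₂ ⊆ vertComp C v g₁ := by
    intro w hw
    obtain ⟨W⟩ := hw
    have hvW : v ∉ W.support := fun h => hvnot ⟨W.takeUntil v h⟩
    refine ⟨W.transfer (delVertex C v) ?_⟩
    intro e he
    have he' : e ∈ C.edgeSet := by
      have := W.edges_subset_edgeSet he
      rw [SimpleGraph.edgeSet_deleteEdges] at this
      exact this.1
    rw [delVertex, SimpleGraph.edgeSet_deleteEdges]
    refine ⟨he', ?_⟩
    induction e with
    | h x y =>
      intro hve
      rcases Sym2.mem_iff.mp hve with rfl | rfl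
      · exact hvW (W.fst_mem_support_of_mem_edges he)
      · exact hvW (W.snd_mem_support_of_mem_edges he)
  have hmono : labelSet L (edgeSide C g₁ g₂) ⊆ labelSet L (vertComp C v g₁) := by
    apply Set.iUnion₂_subset
    intro x hx
    exact Set.subset_iUnion₂ (s := fun x _ => L x) x (hsub hx)
  rcases hv g₁ hne with h | h
  · exact Or.inr fun x hx => h ▸ hmono hx
  · exact Or.inl fun hx => h (hmono hx)

/-- If `u` and `v` are distinct `μ`-important vertices of the finite tree `C`,
then for every edge `g = g₁g₂` on the unique path in `C` from `u` to `v` and each of the two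
components `K` of `C − g`, it is not the case that `N(K)` contains `μ` together with some
other label; in particular no edge on this path is `μ`-important. -/
theorem statement_4 {V M : Type*} [Fintype V] (C : SimpleGraph V) (hC : C.IsTree)
    (L : V → Set M) (μ : M) (u v : V) (huv : u ≠ v)
    (hu : ImportantVertex C L μ u) (hv : ImportantVertex C L μ v)
    (p : C.Walk u v) (hp : p.IsPath) (g₁ g₂ : V) (hmem : s(g₁, g₂) ∈ p.edges) :
    ((μ ∉ labelSet L (edgeSide C g₁ g₂) ∨ labelSet L (edgeSide C g₁ g₂) ⊆ {μ}) ∧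
      (μ ∉ labelSet L (edgeSide C g₂ g₁) ∨ labelSet L (edgeSide C g₂ g₁) ⊆ {μ})) ∧
    ¬ ImportantEdge C L μ g₁ g₂ := by
  have hadj : C.Adj g₁ g₂ := (SimpleGraph.mem_edgeSet C).mp (p.edges_subset_edgeSet hmem)
  have hswap : ({s(g₂, g₁)} : Set (Sym2 V)) = {s(g₁, g₂)} := by rw [Sym2.eq_swap]
  have key : (μ ∉ labelSet L (edgeSide C g₁ g₂) ∨ labelSet L (edgeSide C g₁ g₂) ⊆ {μ}) ∧
      (μ ∉ labelSet L (edgeSide C g₂ g₁) ∨ labelSet L (edgeSide C g₂ g₁) ⊆ {μ}) := by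
    rcases reach_split p hp.isTrail hmem with ⟨h1, h2⟩ | ⟨h1, h2⟩
    · constructor
      · exact side_lemma hC.IsAcyclic hadj hv h2
      · refine side_lemma hC.IsAcyclic hadj.symm hu ?_
        rw [hswap]
        exact h1.symm
    · constructor
      · exact side_lemma hC.IsAcyclic hadj hu h1.symm
      · refine side_lemma hC.IsAcyclic hadj.symm hv ?_
        rw [hswap]
        exact h2
  refine ⟨key, ?_⟩
  rintro ⟨-, ⟨hμ, hne⟩, -⟩
  rcases key.1 with h | h
  · exact h hμ
  · exact hne (Set.Subset.antisymm h (Set.singleton_subset_iff.mpr hμ))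
end

section
/- Let (r, c) be a state on a finite set E. Suppose that for every 4-element subset S ⊆ E the induced state on S is evenable, where the induced state on S consists of the cyclic order that r induces on S together with the restriction of c to pairs of elements of S. Then the state (r, c) itself is evenable. -/
/-- A flip at position `i` of a state `(r, c)`: the values of the rotation `r` at positions
`i` and `i + 1` are exchanged, and the crossing parity between the two affected elements
`r i` and `r (i + 1)` is toggled; everything else is unchanged. -/
def FlipStep (n : ℕ) {E : Type*} [DecidableEq E]
    (s t : (ZMod n → E) × (E → E → ZMod 2)) : Prop :=
  ∃ i : ZMod n,
    (∀ j : ZMod n,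
      t.1 j = if j = i then s.1 (i + 1) else if j = i + 1 then s.1 i else s.1 j) ∧
    (∀ x y : E,
      t.2 x y =
        if (x = s.1 i ∧ y = s.1 (i + 1)) ∨ (x = s.1 (i + 1) ∧ y = s.1 i)
        then s.2 x y + 1 else s.2 x y)

/-- A state `(r, c)` is evenable if some finite sequence of flips leads to a state whose
parity function vanishes on every pair of distinct elements. -/
def Evenable (n : ℕ) {E : Type*} [DecidableEq E]
    (s : (ZMod n → E) × (E → E → ZMod 2)) : Prop :=
  ∃ t : (ZMod n → E) × (E → E → ZMod 2),
    Relation.ReflTransGen (FlipStep n) s t ∧ ∀ x y : E, x ≠ y → t.2 x y = 0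

set_option maxRecDepth 40000

namespace St6

variable {n : ℕ} {E : Type*} [DecidableEq E]

/-- toggle of the pair `{u,v}` -/
def eTog (u v x y : E) : ZMod 2 := if (x = u ∧ y = v) ∨ (x = v ∧ y = u) then 1 else 0

/-- inversion indicator between two arrangements -/
def invTog (e f : ZMod n ≃ E) (x y : E) : ZMod 2 :=
  if (((e.symm x).val < (e.symm y).val) ↔ ((f.symm x).val < (f.symm y).val)) then 0 else 1

lemma flipStep_equiv (e : ZMod n ≃ E) (c : E → E → ZMod 2) (i : ZMod n) :
    FlipStep n (⇑e, c) (⇑((Equiv.swap i (i+1)).trans e),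
      fun x y => c x y + eTog (e i) (e (i+1)) x y) := by
  refine ⟨i, fun j => ?_, fun x y => ?_⟩
  · simp only [Equiv.trans_apply, Equiv.swap_apply_def]
    split_ifs <;> rfl
  · simp only [eTog]
    split_ifs with h
    · rfl
    · simp

lemma invTog_self (e : ZMod n ≃ E) (x y : E) : invTog e e x y = 0 := by
  simp [invTog]

lemma invTog_diag (e f : ZMod n ≃ E) (x : E) : invTog e f x x = 0 := by
  simp [invTog]

lemma invTog_comm (e f : ZMod n ≃ E) (x y : E) : invTog e f x y = invTog f e x y := by
  simp only [invTog]
  split_ifs with h1 h2 h2 <;> first | rfl | exact absurd h1.symm h2 | exact absurd h2.symm h1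

lemma invTog_swap [NeZero n] (e f : ZMod n ≃ E) (x y : E) :
    invTog e f x y = invTog e f y x := by
  rcases eq_or_ne x y with rfl | hxy
  · rfl
  · have h1 : (e.symm x).val ≠ (e.symm y).val := fun hh =>
      hxy (by have := congrArg e (ZMod.val_injective n hh);
              rwa [Equiv.apply_symm_apply, Equiv.apply_symm_apply] at this)
    have h2 : (f.symm x).val ≠ (f.symm y).val := fun hh =>
      hxy (by have := congrArg f (ZMod.val_injective n hh);
              rwa [Equiv.apply_symm_apply, Equiv.apply_symm_apply] at this)
    unfold invTog
    split_ifs with hc1 hc2 hc2 <;> first | rfl | (exfalso; omega)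

lemma invTog_triple (e f g : ZMod n ≃ E) (x y : E) :
    invTog e f x y + invTog f g x y = invTog e g x y := by
  simp only [invTog]
  split_ifs with h1 h2 h3 <;> first | rfl | tauto

lemma natCast_val_self [NeZero n] (i : ZMod n) : ((i.val : ℕ) : ZMod n) = i :=
  ZMod.val_injective n (by rw [ZMod.val_natCast_of_lt (ZMod.val_lt i)])

lemma fin_mono_id [NeZero n] (g : ZMod n → ZMod n)
    (h : ∀ i j : ZMod n, i.val < j.val → (g i).val < (g j).val) : ∀ i, g i = i := by
  have hG : StrictMono (fun k : Fin n => (⟨(g ((k : ℕ) : ZMod n)).val, ZMod.val_lt _⟩ : Fin n)) := by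
    intro k l hkl
    simp only [Fin.mk_lt_mk]
    exact h _ _ (by rwa [ZMod.val_natCast_of_lt k.isLt, ZMod.val_natCast_of_lt l.isLt])
  have hinj : Function.Injective (fun k : Fin n => (⟨(g ((k : ℕ) : ZMod n)).val, ZMod.val_lt _⟩ : Fin n)) :=
    hG.injective
  have hsurj : Function.Surjective (fun k : Fin n => (⟨(g ((k : ℕ) : ZMod n)).val, ZMod.val_lt _⟩ : Fin n)) :=
    Finite.injective_iff_surjective.mp hinj
  have hrange : Set.range (fun k : Fin n => (⟨(g ((k : ℕ) : ZMod n)).val, ZMod.val_lt _⟩ : Fin n)) = Set.range (id : Fin n → Fin n) := by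
    rw [Set.range_id, Set.range_eq_univ.mpr hsurj]
  have wf : WellFoundedLT (Fin n) := inferInstance
  have key := @Set.range_injOn_strictMono (Fin n) (Fin n) _ _ wf
  have := key.eq_iff hG (strictMono_id : StrictMono (id : Fin n → Fin n)) |>.1 hrange
  intro i
  have hi := congrFun this ⟨i.val, ZMod.val_lt i⟩
  simp only [id] at hi
  apply ZMod.val_injective
  have : (g ((i.val : ℕ) : ZMod n)).val = i.val := congrArg Fin.val hi
  rwa [natCast_val_self] at this

lemma zmod2_cases (z : ZMod 2) : z = 0 ∨ z = 1 := by revert z; decide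

lemma zmod2_rearr (a b d : ZMod 2) : a + b + (d + b) = a + d := by revert a b d; decide

lemma val_add_one_of_lt [NeZero n] {i : ZMod n} (h : i.val + 1 < n) :
    (i + 1).val = i.val + 1 := by
  conv_lhs => rw [← natCast_val_self i]
  rw [← Nat.cast_one, ← Nat.cast_add, ZMod.val_natCast_of_lt h]

lemma chain_all_zero [NeZero n] (e f : ZMod n ≃ E)
    (h : ∀ i : ZMod n, i.val + 1 < n → invTog e f (e i) (e (i + 1)) = 0) :
    ∀ x y, invTog e f x y = 0 := by
  have key1 : ∀ k : ℕ, k + 1 < n →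
      (f.symm (e ((k : ℕ) : ZMod n))).val < (f.symm (e ((k + 1 : ℕ) : ZMod n))).val := by
    intro k hk
    have hvk : ((k : ℕ) : ZMod n).val = k := ZMod.val_natCast_of_lt (by omega)
    have hi := h ((k : ℕ) : ZMod n) (by rw [hvk]; omega)
    have hcast : ((k : ℕ) : ZMod n) + 1 = (((k + 1 : ℕ)) : ZMod n) := by push_cast; ring
    unfold invTog at hi
    rw [Equiv.symm_apply_apply, Equiv.symm_apply_apply] at hi
    split_ifs at hi with hiff
    · rw [← hcast]
      refine hiff.mp ?_
      rw [hvk, val_add_one_of_lt (by rw [hvk]; omega), hvk]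
      omega
    · exact absurd hi one_ne_zero
  have key : ∀ d k : ℕ, 0 < d → k + d < n →
      (f.symm (e ((k : ℕ) : ZMod n))).val < (f.symm (e ((k + d : ℕ) : ZMod n))).val := by
    intro d
    induction d with
    | zero => omega
    | succ d ih =>
      intro k hd hkd
      rcases Nat.eq_zero_or_pos d with rfl | hd0
      · exact key1 k hkd
      · calc (f.symm (e ((k : ℕ) : ZMod n))).val
            < (f.symm (e ((k + d : ℕ) : ZMod n))).val := ih k hd0 (by omega)
          _ < (f.symm (e ((k + d + 1 : ℕ) : ZMod n))).val := key1 (k + d) (by omega)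
          _ = (f.symm (e ((k + (d + 1) : ℕ) : ZMod n))).val := by ring_nf
  intro x y
  rcases eq_or_ne x y with rfl | hxy
  · exact invTog_diag e f x
  · have hij : e.symm x ≠ e.symm y := fun hh => hxy (by
      have := congrArg e hh; rwa [Equiv.apply_symm_apply, Equiv.apply_symm_apply] at this)
    have hvij : (e.symm x).val ≠ (e.symm y).val := fun hh => hij (ZMod.val_injective n hh)
    have hgen : ∀ z w : E, (e.symm z).val < (e.symm w).val →
        (f.symm z).val < (f.symm w).val := by
      intro z w hzw
      have h2 := key ((e.symm w).val - (e.symm z).val) (e.symm z).val (by omega)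
        (by have := ZMod.val_lt (e.symm w); omega)
      have hsum : (e.symm z).val + ((e.symm w).val - (e.symm z).val) = (e.symm w).val := by omega
      rw [hsum, natCast_val_self, natCast_val_self, Equiv.apply_symm_apply,
        Equiv.apply_symm_apply] at h2
      exact h2
    unfold invTog
    rcases Nat.lt_or_ge (e.symm x).val (e.symm y).val with hlt | hge
    · rw [if_pos (iff_of_true hlt (hgen x y hlt))]
    · have hlt' : (e.symm y).val < (e.symm x).val := by omega
      have := hgen y x hlt'
      rw [if_pos (iff_of_false (by omega) (by omega))]

variable [Fintype E]

def Nbad (e f : ZMod n ≃ E) : ℕ :=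
  (Finset.univ.filter fun p : E × E => invTog e f p.1 p.2 = 1).card

lemma sort_reach [NeZero n] (f : ZMod n ≃ E) :
    ∀ (N : ℕ) (e : ZMod n ≃ E) (c : E → E → ZMod 2), Nbad e f ≤ N →
      Relation.ReflTransGen (FlipStep n) (⇑e, c)
        (⇑f, fun x y => c x y + invTog e f x y) := by
  intro N
  induction N with
  | zero =>
    intro e c hN
    have hz : ∀ x y, invTog e f x y = 0 := by
      intro x y
      rcases zmod2_cases (invTog e f x y) with h | h
      · exact h
      · exfalso
        have hmem : (x, y) ∈ Finset.univ.filter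
            (fun p : E × E => invTog e f p.1 p.2 = 1) := by
          simp only [Finset.mem_filter, Finset.mem_univ, true_and]; exact h
        have := Finset.card_pos.mpr ⟨(x, y), hmem⟩
        unfold Nbad at hN; omega
    have hef : e = f := by
      have hg : ∀ i j : ZMod n, i.val < j.val →
          (f.symm (e i)).val < (f.symm (e j)).val := by
        intro i j hij
        have hh := hz (e i) (e j)
        unfold invTog at hh
        rw [Equiv.symm_apply_apply, Equiv.symm_apply_apply] at hh
        split_ifs at hh with hiff
        · exact hiff.mp hij
        · exact absurd hh one_ne_zero
      have hid := fin_mono_id (fun i => f.symm (e i)) hg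
      apply Equiv.ext; intro i
      exact (Equiv.symm_apply_eq f).mp (hid i)
    subst hef
    have heq : (fun x y => c x y + invTog e e x y) = c := by
      funext x y; rw [invTog_self, add_zero]
    rw [heq]
  | succ N ih =>
    intro e c hN
    by_cases h0 : Nbad e f ≤ N
    · exact ih e c h0
    have hpos : 0 < Nbad e f := by omega
    have hadj : ∃ i : ZMod n, i.val + 1 < n ∧ invTog e f (e i) (e (i + 1)) = 1 := by
      by_contra hc
      push_neg at hc
      have h' : ∀ i : ZMod n, i.val + 1 < n → invTog e f (e i) (e (i + 1)) = 0 := by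
        intro i hi
        rcases zmod2_cases (invTog e f (e i) (e (i + 1))) with h | h
        · exact h
        · exact absurd h (hc i hi)
      have hall := chain_all_zero e f h'
      have : Nbad e f = 0 := by
        unfold Nbad
        rw [Finset.card_eq_zero, Finset.eq_empty_iff_forall_notMem]
        intro p hp
        simp only [Finset.mem_filter, Finset.mem_univ, true_and] at hp
        rw [hall] at hp
        exact absurd hp.symm one_ne_zero
      omega
    obtain ⟨i, hi, hinv⟩ := hadj
    set u := e i with hu
    set v := e (i + 1) with hv
    have hvadj : (i + 1).val = i.val + 1 := val_add_one_of_lt hi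
    set e' := (Equiv.swap i (i + 1)).trans e with he'
    have hstep := flipStep_equiv e c i
    -- value facts
    have hswv : ∀ w : ZMod n, ((Equiv.swap i (i + 1)) w).val =
        if w.val = i.val then i.val + 1
        else if w.val = i.val + 1 then i.val else w.val := by
      intro w
      rcases eq_or_ne w i with rfl | h1
      · rw [Equiv.swap_apply_left, if_pos rfl, hvadj]
      · rcases eq_or_ne w (i + 1) with rfl | h2
        · rw [Equiv.swap_apply_right, if_neg (by rw [hvadj]; omega), if_pos hvadj]
        · rw [Equiv.swap_apply_of_ne_of_ne h1 h2,
            if_neg (fun hh => h1 (ZMod.val_injective n hh)),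
            if_neg (fun hh => h2 (ZMod.val_injective n (by rw [hh, hvadj])))]
    have hsymm' : ∀ z : E, (e'.symm z) = Equiv.swap i (i + 1) (e.symm z) := by
      intro z
      rw [he', Equiv.symm_trans_apply, Equiv.symm_swap]
    have KEY1 : ∀ x y : E, invTog e' f x y = invTog e f x y + eTog u v x y := by
      intro x y
      have hxu : (x = u) ↔ ((e.symm x).val = i.val) := by
        rw [hu]
        constructor
        · intro hh; rw [hh, Equiv.symm_apply_apply]
        · intro hh
          have := ZMod.val_injective n hh
          rw [← this, Equiv.apply_symm_apply]
      have hxv : (x = v) ↔ ((e.symm x).val = i.val + 1) := by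
        rw [hv]
        constructor
        · intro hh; rw [hh, Equiv.symm_apply_apply, hvadj]
        · intro hh
          have : e.symm x = i + 1 := ZMod.val_injective n (by rw [hh, hvadj])
          rw [← this, Equiv.apply_symm_apply]
      have hyu : (y = u) ↔ ((e.symm y).val = i.val) := by
        rw [hu]
        constructor
        · intro hh; rw [hh, Equiv.symm_apply_apply]
        · intro hh
          have := ZMod.val_injective n hh
          rw [← this, Equiv.apply_symm_apply]
      have hyv : (y = v) ↔ ((e.symm y).val = i.val + 1) := by
        rw [hv]
        constructor
        · intro hh; rw [hh, Equiv.symm_apply_apply, hvadj]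
        · intro hh
          have : e.symm y = i + 1 := ZMod.val_injective n (by rw [hh, hvadj])
          rw [← this, Equiv.apply_symm_apply]
      unfold invTog eTog
      rw [hsymm' x, hsymm' y, hswv, hswv]
      simp only [hxu, hxv, hyu, hyv]
      split_ifs <;> first | rfl | decide | omega | (exfalso; omega)
    have KEY2 : Nbad e' f ≤ N := by
      have hTog : eTog u v u v = 1 := by unfold eTog; rw [if_pos (Or.inl ⟨rfl, rfl⟩)]
      have hmemuv : (u, v) ∈ Finset.univ.filter
          (fun p : E × E => invTog e f p.1 p.2 = 1) := by
        simp only [Finset.mem_filter, Finset.mem_univ, true_and]; exact hinv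
      have hsub : (Finset.univ.filter fun p : E × E => invTog e' f p.1 p.2 = 1) ⊆
          (Finset.univ.filter fun p : E × E => invTog e f p.1 p.2 = 1).erase (u, v) := by
        intro p hp
        simp only [Finset.mem_filter, Finset.mem_univ, true_and] at hp
        rw [Finset.mem_erase]
        simp only [Finset.mem_filter, Finset.mem_univ, true_and]
        have h1 := KEY1 p.1 p.2
        constructor
        · intro hpe
          rw [hpe] at hp
          rw [KEY1 u v, hinv, hTog] at hp
          exact absurd hp (by decide)
        · rcases zmod2_cases (eTog u v p.1 p.2) with hz | hz
          · rw [h1, hz, add_zero] at hp; exact hp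
          · -- p is (u,v) or (v,u); (u,v) impossible as above; (v,u): invTog e f v u = 1
            have hcase : (p.1 = u ∧ p.2 = v) ∨ (p.1 = v ∧ p.2 = u) := by
              by_contra hcc
              unfold eTog at hz
              rw [if_neg hcc] at hz
              exact absurd hz.symm one_ne_zero
            rcases hcase with ⟨ha, hb⟩ | ⟨ha, hb⟩
            · rw [ha, hb, KEY1 u v, hinv, hTog] at hp
              exact absurd hp (by decide)
            · have : invTog e f p.1 p.2 = invTog e f u v := by
                rw [ha, hb, invTog_swap]
              rw [this, hinv]
      have hcard := Finset.card_le_card hsub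
      rw [Finset.card_erase_of_mem hmemuv] at hcard
      unfold Nbad at hN ⊢
      omega
    have htail := ih e' (fun x y => c x y + eTog u v x y) KEY2
    refine Relation.ReflTransGen.head hstep ?_
    have hfun : (fun x y => (c x y + eTog u v x y) + invTog e' f x y) =
        (fun x y => c x y + invTog e f x y) := by
      funext x y
      rw [KEY1 x y, zmod2_rearr]
    rw [← hfun]
    exact htail
def vTog (u w x y : E) : ZMod 2 :=
  (if x = u ∨ x = w then 1 else 0) + (if y = u ∨ y = w then 1 else 0)

def tTog (T : Finset E) (x y : E) : ZMod 2 :=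
  (if x ∈ T then 1 else 0) + (if y ∈ T then 1 else 0)

lemma zmod2_cancel (a b : ZMod 2) : a + (a + b) = b := by revert a b; decide

lemma zmod2_juggle (iEF iEF' iFF' Et L c0 : ZMod 2)
    (h1 : iEF + iFF' = iEF') (h2 : iFF' + Et = L) :
    ((c0 + iEF) + Et) + iEF' = c0 + L := by
  revert iEF iEF' iFF' Et L c0; decide

lemma loop_reach [NeZero n] (e : ZMod n ≃ E) (c : E → E → ZMod 2) (u w : E)
    (huw : u ≠ w) :
    Relation.ReflTransGen (FlipStep n) (⇑e, c)
      (⇑e, fun x y => c x y + vTog u w x y) := by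
  have hcard : Fintype.card E = n := by
    rw [← ZMod.card n]; exact (Fintype.card_congr e).symm
  have hn2 : 2 ≤ n := by
    rw [← hcard]
    exact Fintype.one_lt_card_iff_nontrivial.mpr ⟨⟨u, w, huw⟩⟩
  set i0 : ZMod n := ((n - 1 : ℕ) : ZMod n) with hi0def
  have hv0 : i0.val = n - 1 := ZMod.val_natCast_of_lt (by omega)
  have hi01 : i0 + 1 = 0 := by
    have h : ((n - 1 : ℕ) : ZMod n) + ((1 : ℕ) : ZMod n) = ((n - 1 + 1 : ℕ) : ZMod n) :=
      (Nat.cast_add _ _).symm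
    have h2 : n - 1 + 1 = n := by omega
    rw [h2] at h
    rw [hi0def]
    simpa [ZMod.natCast_self] using h
  have hi0ne : i0 ≠ 0 := fun hh => by
    rw [hh, ZMod.val_zero] at hv0; omega
  -- build target arrangement f with f i0 = u, f 0 = w
  set g1 : ZMod n ≃ E := (Equiv.swap i0 (e.symm u)).trans e with hg1
  have hg1i0 : g1 i0 = u := by
    rw [hg1]; simp [Equiv.swap_apply_left]
  set f : ZMod n ≃ E := (Equiv.swap (0 : ZMod n) (g1.symm w)).trans g1 with hf
  have hf0 : f 0 = w := by
    rw [hf]; simp [Equiv.swap_apply_left]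
  have hfi0 : f i0 = u := by
    rw [hf]
    have h2 : i0 ≠ g1.symm w := fun hh => huw (by
      rw [← hg1i0, hh, Equiv.apply_symm_apply])
    simp only [Equiv.trans_apply]
    rw [Equiv.swap_apply_of_ne_of_ne hi0ne h2, hg1i0]
  have hfi01 : f (i0 + 1) = w := by rw [hi01, hf0]
  -- three phases
  have h1 := sort_reach f (Nbad e f) e c le_rfl
  have hstep := flipStep_equiv f (fun x y => c x y + invTog e f x y) i0
  rw [hfi0, hfi01] at hstep
  set f' : ZMod n ≃ E := (Equiv.swap i0 (i0 + 1)).trans f with hf'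
  have h2 := sort_reach e (Nbad f' e) f'
    (fun x y => (c x y + invTog e f x y) + eTog u w x y) le_rfl
  have hcomp := h1.trans (Relation.ReflTransGen.head hstep h2)
  -- now identify the resulting parity function
  have hvi01 : (i0 + 1).val = 0 := by rw [hi01, ZMod.val_zero]
  have hclaim : ∀ x y : E, invTog f f' x y + eTog u w x y = vTog u w x y := by
    intro x y
    have hswv : ∀ z : ZMod n, ((Equiv.swap i0 (i0 + 1)) z).val =
        if z.val = n - 1 then 0 else if z.val = 0 then n - 1 else z.val := by
      intro z
      rcases eq_or_ne z i0 with rfl | hz1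
      · rw [Equiv.swap_apply_left, hvi01, if_pos hv0]
      · rcases eq_or_ne z (i0 + 1) with rfl | hz2
        · rw [Equiv.swap_apply_right, hv0, if_neg (by rw [hvi01]; omega), if_pos hvi01]
        · rw [Equiv.swap_apply_of_ne_of_ne hz1 hz2,
            if_neg (fun hh => hz1 (ZMod.val_injective n (by rw [hh, hv0]))),
            if_neg (fun hh => hz2 (ZMod.val_injective n (by rw [hh, hvi01])))]
    have hsymm' : ∀ z : E, (f'.symm z) = Equiv.swap i0 (i0 + 1) (f.symm z) := by
      intro z; rw [hf', Equiv.symm_trans_apply, Equiv.symm_swap]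
    have hxu : (x = u) ↔ ((f.symm x).val = n - 1) := by
      rw [← hfi0, ← Equiv.symm_apply_eq]
      exact ⟨fun hh => by rw [hh, hv0], fun hh => ZMod.val_injective n (by rw [hh, hv0])⟩
    have hxw : (x = w) ↔ ((f.symm x).val = 0) := by
      rw [← hf0, ← Equiv.symm_apply_eq]
      exact ⟨fun hh => by rw [hh, ZMod.val_zero],
        fun hh => ZMod.val_injective n (by rw [hh, ZMod.val_zero])⟩
    have hyu : (y = u) ↔ ((f.symm y).val = n - 1) := by
      rw [← hfi0, ← Equiv.symm_apply_eq]
      exact ⟨fun hh => by rw [hh, hv0], fun hh => ZMod.val_injective n (by rw [hh, hv0])⟩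
    have hyw : (y = w) ↔ ((f.symm y).val = 0) := by
      rw [← hf0, ← Equiv.symm_apply_eq]
      exact ⟨fun hh => by rw [hh, ZMod.val_zero],
        fun hh => ZMod.val_injective n (by rw [hh, ZMod.val_zero])⟩
    have hAlt : (f.symm x).val < n := ZMod.val_lt _
    have hBlt : (f.symm y).val < n := ZMod.val_lt _
    unfold invTog eTog vTog
    rw [hsymm' x, hsymm' y, hswv, hswv]
    simp only [hxu, hxw, hyu, hyw]
    split_ifs <;> first | rfl | decide | omega | (exfalso; omega)
  have hfun : (fun x y => ((c x y + invTog e f x y) + eTog u w x y) + invTog f' e x y) =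
      (fun x y => c x y + vTog u w x y) := by
    funext x y
    rw [invTog_comm f' e]
    have ht : invTog e f x y + invTog f f' x y = invTog e f' x y := invTog_triple e f f' x y
    exact zmod2_juggle _ _ _ _ _ _ ht (hclaim x y)
  rw [← hfun]
  exact hcomp

lemma loops_reach [NeZero n] (e : ZMod n ≃ E) :
    ∀ (k : ℕ) (T : Finset E) (c : E → E → ZMod 2), T.card = k + k →
      Relation.ReflTransGen (FlipStep n) (⇑e, c)
        (⇑e, fun x y => c x y + tTog T x y) := by
  intro k
  induction k with
  | zero =>
    intro T c hT
    have hTe : T = ∅ := Finset.card_eq_zero.mp hT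
    have : (fun x y => c x y + tTog T x y) = c := by
      funext x y; simp [tTog, hTe]
    rw [this]
  | succ k ih =>
    intro T c hT
    have hT1 : T.Nonempty := Finset.card_pos.mp (by omega)
    obtain ⟨u, hu⟩ := hT1
    have hT2 : (T.erase u).Nonempty := Finset.card_pos.mp (by
      rw [Finset.card_erase_of_mem hu]; omega)
    obtain ⟨w, hw⟩ := hT2
    have hwu : w ≠ u := (Finset.mem_erase.mp hw).1
    have hwT : w ∈ T := (Finset.mem_erase.mp hw).2
    set T'' := (T.erase u).erase w with hT''
    have hcard'' : T''.card = k + k := by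
      rw [hT'', Finset.card_erase_of_mem hw, Finset.card_erase_of_mem hu]
      omega
    have h1 := loop_reach e c u w (Ne.symm hwu)
    have h2 := ih T'' (fun x y => c x y + vTog u w x y) hcard''
    have hind : ∀ z : E, (if z ∈ T then (1 : ZMod 2) else 0) =
        (if z = u ∨ z = w then 1 else 0) + (if z ∈ T'' then 1 else 0) := by
      intro z
      have hmem : z ∈ T'' ↔ z ≠ w ∧ z ≠ u ∧ z ∈ T := by
        rw [hT'', Finset.mem_erase, Finset.mem_erase]
      by_cases hzu : z = u
      · subst hzu
        rw [if_pos hu, if_pos (Or.inl rfl), if_neg (fun hh => ((hmem.mp hh).2.1 rfl))]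
        decide
      · by_cases hzw : z = w
        · subst hzw
          rw [if_pos hwT, if_pos (Or.inr rfl), if_neg (fun hh => ((hmem.mp hh).1 rfl))]
          decide
        · by_cases hzT : z ∈ T
          · rw [if_pos hzT, if_neg (show ¬(z = u ∨ z = w) by tauto),
              if_pos (hmem.mpr ⟨hzw, hzu, hzT⟩), zero_add]
          · rw [if_neg hzT, if_neg (show ¬(z = u ∨ z = w) by tauto),
              if_neg (fun hh => hzT (hmem.mp hh).2.2), zero_add]
    have hfun : (fun x y => (c x y + vTog u w x y) + tTog T'' x y) =
        (fun x y => c x y + tTog T x y) := by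
      funext x y
      unfold vTog tTog
      rw [hind x, hind y]
      ring
    rw [← hfun]
    exact h1.trans h2
def I4 (x y : ZMod 4) (a : ZMod 4 → ZMod 4) : ZMod 2 :=
  if ∃ j : ZMod 4, a j = x ∧ a (j + 2) = y then 1 else 0

def cross4 (x y z w u v : ZMod 4) : ZMod 2 :=
  if (u = x ∧ v = z) ∨ (u = z ∧ v = x) ∨ (u = x ∧ v = w) ∨ (u = w ∧ v = x) ∨
     (u = y ∧ v = z) ∨ (u = z ∧ v = y) ∨ (u = y ∧ v = w) ∨ (u = w ∧ v = y)
  then 1 else 0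

def S4 (x y z w : ZMod 4) (c : ZMod 4 → ZMod 4 → ZMod 2) : ZMod 2 :=
  c x z + c x w + c y z + c y w

lemma zmod2_swapcancel (a b d : ZMod 2) : (a + d) + (b + d) = a + b := by
  revert a b d; decide

lemma ite_add_form (p : Prop) [Decidable p] (s : ZMod 2) :
    (if p then s + 1 else s) = s + (if p then 1 else 0) := by
  split_ifs <;> simp

lemma phi_step {x y z w : ZMod 4}
    (hI : ∀ a : ZMod 4 → ZMod 4, Function.Bijective a → ∀ i : ZMod 4,
      I4 x y (fun j => if j = i then a (i + 1) else if j = i + 1 then a i else a j)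
        = I4 x y a + cross4 x y z w (a i) (a (i + 1)))
    (hS : ∀ u v : ZMod 4, eTog u v x z + eTog u v x w + eTog u v y z + eTog u v y w
        = cross4 x y z w u v)
    {s t : (ZMod 4 → ZMod 4) × (ZMod 4 → ZMod 4 → ZMod 2)}
    (hst : FlipStep 4 s t) (hb : Function.Bijective s.1) :
    Function.Bijective t.1 ∧
      S4 x y z w t.2 + I4 x y t.1 = S4 x y z w s.2 + I4 x y s.1 := by
  obtain ⟨i, h1, h2⟩ := hst
  have ht1 : t.1 = fun j => if j = i then s.1 (i + 1) else if j = i + 1 then s.1 i else s.1 j :=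
    funext h1
  have hbt : Function.Bijective t.1 := by
    have : t.1 = s.1 ∘ ⇑(Equiv.swap i (i + 1)) := by
      funext j
      rw [ht1]
      simp only [Function.comp_apply, Equiv.swap_apply_def]
      split_ifs <;> rfl
    rw [this]
    exact Function.Bijective.comp hb (Equiv.bijective _)
  refine ⟨hbt, ?_⟩
  have ht2 : ∀ p q : ZMod 4, t.2 p q = s.2 p q + eTog (s.1 i) (s.1 (i + 1)) p q := by
    intro p q
    rw [h2 p q]
    unfold eTog
    exact ite_add_form _ _
  have hS4 : S4 x y z w t.2 = S4 x y z w s.2 + cross4 x y z w (s.1 i) (s.1 (i + 1)) := by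
    unfold S4
    rw [ht2, ht2, ht2, ht2, ← hS (s.1 i) (s.1 (i + 1))]
    ring
  have hI4 : I4 x y t.1 = I4 x y s.1 + cross4 x y z w (s.1 i) (s.1 (i + 1)) := by
    rw [ht1]
    exact hI s.1 hb i
  rw [hS4, hI4]
  exact zmod2_swapcancel _ _ _

lemma D1a : ∀ a : ZMod 4 → ZMod 4, Function.Bijective a → ∀ i : ZMod 4,
    I4 0 1 (fun j => if j = i then a (i + 1) else if j = i + 1 then a i else a j)
      = I4 0 1 a + cross4 0 1 2 3 (a i) (a (i + 1)) := by decide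

lemma D1b : ∀ a : ZMod 4 → ZMod 4, Function.Bijective a → ∀ i : ZMod 4,
    I4 0 2 (fun j => if j = i then a (i + 1) else if j = i + 1 then a i else a j)
      = I4 0 2 a + cross4 0 2 1 3 (a i) (a (i + 1)) := by decide

lemma D1c : ∀ a : ZMod 4 → ZMod 4, Function.Bijective a → ∀ i : ZMod 4,
    I4 0 3 (fun j => if j = i then a (i + 1) else if j = i + 1 then a i else a j)
      = I4 0 3 a + cross4 0 3 1 2 (a i) (a (i + 1)) := by decide

lemma DSa : ∀ u v : ZMod 4, eTog u v 0 2 + eTog u v 0 3 + eTog u v 1 2 + eTog u v 1 3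
    = cross4 0 1 2 3 u v := by decide

lemma DSb : ∀ u v : ZMod 4, eTog u v 0 1 + eTog u v 0 3 + eTog u v 2 1 + eTog u v 2 3
    = cross4 0 2 1 3 u v := by decide

lemma DSc : ∀ u v : ZMod 4, eTog u v 0 1 + eTog u v 0 2 + eTog u v 3 1 + eTog u v 3 2
    = cross4 0 3 1 2 u v := by decide

lemma D2 : ∀ a : ZMod 4 → ZMod 4, Function.Bijective a →
    ¬(I4 0 1 a = 1 ∧ I4 0 2 a = 1 ∧ I4 0 3 a = 1) := by decide

lemma four_cond (c4 : ZMod 4 → ZMod 4 → ZMod 2)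
    (hev : Evenable 4 ((id : ZMod 4 → ZMod 4), c4)) :
    ¬(S4 0 1 2 3 c4 = 1 ∧ S4 0 2 1 3 c4 = 0 ∧ S4 0 3 1 2 c4 = 1) := by
  rintro ⟨hSa, hSb, hSc⟩
  obtain ⟨tend, hreach, hzero⟩ := hev
  have main : ∀ st : (ZMod 4 → ZMod 4) × (ZMod 4 → ZMod 4 → ZMod 2),
      Relation.ReflTransGen (FlipStep 4) ((id : ZMod 4 → ZMod 4), c4) st →
      Function.Bijective st.1 ∧
        S4 0 1 2 3 st.2 + I4 0 1 st.1 = S4 0 1 2 3 c4 + I4 0 1 (id : ZMod 4 → ZMod 4) ∧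
        S4 0 2 1 3 st.2 + I4 0 2 st.1 = S4 0 2 1 3 c4 + I4 0 2 (id : ZMod 4 → ZMod 4) ∧
        S4 0 3 1 2 st.2 + I4 0 3 st.1 = S4 0 3 1 2 c4 + I4 0 3 (id : ZMod 4 → ZMod 4) := by
    intro st h
    induction h with
    | refl => exact ⟨Function.bijective_id, rfl, rfl, rfl⟩
    | tail hsteps hstep ih =>
      obtain ⟨hb, ha, hbb, hc⟩ := ih
      obtain ⟨hb1, he1⟩ := phi_step D1a DSa hstep hb
      obtain ⟨_, he2⟩ := phi_step D1b DSb hstep hb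
      obtain ⟨_, he3⟩ := phi_step D1c DSc hstep hb
      exact ⟨hb1, by rw [he1, ha], by rw [he2, hbb], by rw [he3, hc]⟩
  obtain ⟨hbend, hea, heb, hec⟩ := main tend hreach
  have hz : ∀ p q : ZMod 4, p ≠ q → tend.2 p q = 0 := hzero
  have hSzeroa : S4 0 1 2 3 tend.2 = 0 := by
    unfold S4
    rw [hz 0 2 (by decide), hz 0 3 (by decide), hz 1 2 (by decide), hz 1 3 (by decide)]
    decide
  have hSzerob : S4 0 2 1 3 tend.2 = 0 := by
    unfold S4
    rw [hz 0 1 (by decide), hz 0 3 (by decide), hz 2 1 (by decide), hz 2 3 (by decide)]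
    decide
  have hSzeroc : S4 0 3 1 2 tend.2 = 0 := by
    unfold S4
    rw [hz 0 1 (by decide), hz 0 2 (by decide), hz 3 1 (by decide), hz 3 2 (by decide)]
    decide
  have hIida : I4 0 1 (id : ZMod 4 → ZMod 4) = 0 := by decide
  have hIidb : I4 0 2 (id : ZMod 4 → ZMod 4) = 1 := by decide
  have hIidc : I4 0 3 (id : ZMod 4 → ZMod 4) = 0 := by decide
  rw [hSzeroa, hSa, hIida, zero_add, add_zero] at hea
  rw [hSzerob, hSb, hIidb, zero_add, zero_add] at heb
  rw [hSzeroc, hSc, hIidc, zero_add, add_zero] at hec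
  exact D2 tend.1 hbend ⟨hea, heb, hec⟩
lemma zmod2_ne_iff (a b : ZMod 2) : a ≠ b → a = b + 1 := by revert a b; decide

lemma zmod2_aka (a k : ZMod 2) : a + k + a = k := by revert a k; decide

lemma zmod2_final (a b d : ZMod 2) : (a + (b + d)) + (a + b + d) = 0 := by
  revert a b d; decide

lemma zmod2_self (a : ZMod 2) : a + a = 0 := by revert a; decide

lemma zmod2_S1 (A B X Y Z : ZMod 2) : Y + Z + A + B = A + X + Y + (B + X + Z) := by
  revert A B X Y Z; decide

lemma zmod2_S2 (A C X Y Z : ZMod 2) : X + Z + A + C = A + X + Y + (C + Y + Z) := by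
  revert A C X Y Z; decide

lemma zmod2_S3 (B C X Y Z : ZMod 2) : X + Y + B + C = B + X + Z + (C + Y + Z) := by
  revert B C X Y Z; decide

lemma zmod2_01 : (0 : ZMod 2) ≠ 1 := by decide

lemma zmod2_10 : (1 : ZMod 2) ≠ 0 := by decide

end St6

/-- If for every 4-element subset `S` of `E` the state induced on `S`
(the cyclic order that `r` induces on `S`, together with the restriction of `c`) is
evenable, then the state `(r, c)` itself is evenable. A 4-element subset is encoded by
the (unique) enumeration `p` of its positions that is strictly increasing with respect
to `ZMod.val`, and the induced state lives on `ZMod 4` with the identity rotation. -/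
theorem statement_6 {n : ℕ} (hn : 1 ≤ n) {E : Type*} [DecidableEq E] [Fintype E]
    (hcard : Fintype.card E = n)
    (r : ZMod n → E) (hr : Function.Bijective r)
    (c : E → E → ZMod 2) (hsymm : ∀ x y : E, c x y = c y x) (hdiag : ∀ x : E, c x x = 0)
    (h4 : ∀ p : ZMod 4 → ZMod n,
      (∀ j k : ZMod 4, j.val < k.val → (p j).val < (p k).val) →
      Evenable 4 ((id : ZMod 4 → ZMod 4), fun j k : ZMod 4 => c (r (p j)) (r (p k)))) :
    Evenable n (r, c) := by
  classical
  haveI : NeZero n := ⟨by omega⟩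
  set re : ZMod n ≃ E := Equiv.ofBijective r hr with hre
  have hcoe : ⇑re = r := rfl
  set e0 : E := r 0 with he0
  set t : E → ZMod 2 := fun x => c e0 x with ht
  set S : Finset E := Finset.univ.filter (fun x => t x = 1) with hS
  set κ : ZMod 2 := if Even S.card then 0 else 1 with hκ
  set t'' : E → ZMod 2 := fun x => t x + (if x = e0 then κ else 0) with ht''
  set T : Finset E := Finset.univ.filter (fun x => t'' x = 1) with hT
  have hte0 : t e0 = 0 := hdiag e0
  have ht''e0 : t'' e0 = κ := by rw [ht'']; simp [hte0]
  have ht''ne : ∀ x, x ≠ e0 → t'' x = t x := by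
    intro x hx; rw [ht'']; simp [hx]
  have he0S : e0 ∉ S := by
    rw [hS]; simp only [Finset.mem_filter, Finset.mem_univ, true_and, hte0]
    exact fun hh => St6.zmod2_01 hh
  have hTeven : Even T.card := by
    by_cases hev : Even S.card
    · have hκ0 : κ = 0 := by rw [hκ, if_pos hev]
      have : T = S := by
        rw [hT, hS]
        apply Finset.filter_congr
        intro x _
        by_cases hx : x = e0
        · subst hx; rw [ht''e0, hκ0, hte0]
        · rw [ht''ne x hx]
      rwa [this]
    · have hκ1 : κ = 1 := by rw [hκ, if_neg hev]
      have : T = insert e0 S := by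
        ext z
        rw [hT, hS, Finset.mem_insert]
        simp only [Finset.mem_filter, Finset.mem_univ, true_and]
        by_cases hz : z = e0
        · subst hz; rw [ht''e0, hκ1]; simp
        · rw [ht''ne z hz]; simp [hz]
      rw [this, Finset.card_insert_of_notMem he0S]
      exact (Nat.not_even_iff_odd.mp hev).add_one
  set c'' : E → E → ZMod 2 := fun x y => c x y + t'' x + t'' y with hc''
  have hc''symm : ∀ x y, c'' x y = c'' y x := by
    intro x y; rw [hc'']; simp only; rw [hsymm x y]; ring
  have hc''e0 : ∀ x, x ≠ e0 → c'' e0 x = κ := by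
    intro x hx
    rw [hc'']; simp only [ht''e0, ht''ne x hx]
    have : t x = c e0 x := rfl
    rw [this]
    exact St6.zmod2_aka _ _
  set pv : E → ℕ := fun x => (re.symm x).val with hpv
  have hpvinj : ∀ x y : E, pv x = pv y → x = y := by
    intro x y h
    have h2 : re.symm x = re.symm y := ZMod.val_injective n h
    have := congrArg re h2
    rwa [Equiv.apply_symm_apply, Equiv.apply_symm_apply] at this
  have hpve0 : pv e0 = 0 := by
    rw [hpv]; simp only [he0, ← hcoe, Equiv.symm_apply_apply, ZMod.val_zero]
  -- the triple condition
  have TRI : ∀ x y z : E, pv x < pv y → pv y < pv z →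
      (c'' x y = c'' y z → c'' x z = c'' x y) := by
    intro x y z hxy hyz
    have hyne : y ≠ e0 := fun hh => by rw [hh, hpve0] at hxy; omega
    have hzne : z ≠ e0 := fun hh => by rw [hh, hpve0] at hyz; omega
    by_cases hxe : x = e0
    · subst hxe
      intro _
      rw [hc''e0 z hzne, hc''e0 y hyne]
    · -- x,y,z all differ from e0, 0 < pv x
      have hpvx : 0 < pv x := by
        rcases Nat.eq_zero_or_pos (pv x) with h0 | h0
        · exact absurd (hpvinj x e0 (by rw [h0, hpve0])) hxe
        · exact h0
      set p : ZMod 4 → ZMod n := fun j =>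
        if j = 0 then 0 else if j = 1 then re.symm x else if j = 2 then re.symm y
        else re.symm z with hp
      have hp0 : p 0 = 0 := by simp [hp]
      have hp1 : p 1 = re.symm x := by
        simp [hp, show (1 : ZMod 4) ≠ 0 by decide]
      have hp2 : p 2 = re.symm y := by
        simp [hp, show (2 : ZMod 4) ≠ 0 by decide, show (2 : ZMod 4) ≠ 1 by decide]
      have hp3 : p 3 = re.symm z := by
        simp [hp, show (3 : ZMod 4) ≠ 0 by decide, show (3 : ZMod 4) ≠ 1 by decide,
          show (3 : ZMod 4) ≠ 2 by decide]
      have hmono : ∀ j k : ZMod 4, j.val < k.val → (p j).val < (p k).val := by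
        have h4cases : ∀ j : ZMod 4, j = 0 ∨ j = 1 ∨ j = 2 ∨ j = 3 := by decide
        have hv4 : (0 : ZMod 4).val = 0 ∧ (1 : ZMod 4).val = 1 ∧ (2 : ZMod 4).val = 2 ∧
            (3 : ZMod 4).val = 3 := by decide
        obtain ⟨hv0, hv1, hv2, hv3⟩ := hv4
        have hx' : (re.symm x).val = pv x := rfl
        have hy' : (re.symm y).val = pv y := rfl
        have hz' : (re.symm z).val = pv z := rfl
        intro j k hjk
        rcases h4cases j with rfl | rfl | rfl | rfl <;>
          rcases h4cases k with rfl | rfl | rfl | rfl <;>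
          simp only [hp0, hp1, hp2, hp3, hv0, hv1, hv2, hv3, ZMod.val_zero, hx', hy', hz']
            at hjk ⊢ <;>
          omega
      have hev4 := h4 p hmono
      have hre1 : r (p 1) = x := by rw [hp1, ← hcoe, Equiv.apply_symm_apply]
      have hre2 : r (p 2) = y := by rw [hp2, ← hcoe, Equiv.apply_symm_apply]
      have hre3 : r (p 3) = z := by rw [hp3, ← hcoe, Equiv.apply_symm_apply]
      have hre0 : r (p 0) = e0 := by rw [hp0, he0]
      have hfc := St6.four_cond (fun j k : ZMod 4 => c (r (p j)) (r (p k))) hev4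
      intro hcc
      by_contra hne
      apply hfc
      have htx : t'' x = t x := ht''ne x hxe
      have hty : t'' y = t y := ht''ne y hyne
      have htz : t'' z = t z := ht''ne z hzne
      have hxz1 : c'' x z = c'' x y + 1 := St6.zmod2_ne_iff _ _ hne
      refine ⟨?_, ?_, ?_⟩
      · show c (r (p 0)) (r (p 2)) + c (r (p 0)) (r (p 3)) +
            c (r (p 1)) (r (p 2)) + c (r (p 1)) (r (p 3)) = 1
        rw [hre0, hre1, hre2, hre3]
        have : c e0 y + c e0 z + c x y + c x z = c'' x y + c'' x z := by
          simp only [hc'', htx, hty, htz, ht]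
          exact St6.zmod2_S1 _ _ (c e0 x) _ _
        rw [this, hxz1]
        exact St6.zmod2_cancel _ _
      · show c (r (p 0)) (r (p 1)) + c (r (p 0)) (r (p 3)) +
            c (r (p 2)) (r (p 1)) + c (r (p 2)) (r (p 3)) = 0
        rw [hre0, hre1, hre2, hre3]
        have : c e0 x + c e0 z + c y x + c y z = c'' x y + c'' y z := by
          simp only [hc'', htx, hty, htz, ht]
          rw [hsymm y x]
          exact St6.zmod2_S2 _ _ _ _ _
        rw [this, hcc]
        exact St6.zmod2_self _
      · show c (r (p 0)) (r (p 1)) + c (r (p 0)) (r (p 2)) +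
            c (r (p 3)) (r (p 1)) + c (r (p 3)) (r (p 2)) = 1
        rw [hre0, hre1, hre2, hre3]
        have : c e0 x + c e0 y + c z x + c z y = c'' x z + c'' y z := by
          simp only [hc'', htx, hty, htz, ht]
          rw [hsymm z x, hsymm z y]
          exact St6.zmod2_S3 _ _ _ _ _
        rw [this, hxz1, hcc]
        exact St6.zmod2_aka _ _
  -- the strict relation realizing the target circular order
  set lt' : E → E → Prop := fun x y =>
    (c'' x y = 0 ∧ pv x < pv y) ∨ (c'' x y = 1 ∧ pv y < pv x) with hlt'
  have hirr : ∀ x, ¬ lt' x x := by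
    intro x h
    rw [hlt'] at h
    rcases h with ⟨_, h⟩ | ⟨_, h⟩ <;> omega
  have hmk0 : ∀ x y, c'' x y = 0 → pv x < pv y → lt' x y := by
    intro x y h1 h2; rw [hlt']; exact Or.inl ⟨h1, h2⟩
  have hmk1 : ∀ x y, c'' x y = 1 → pv y < pv x → lt' x y := by
    intro x y h1 h2; rw [hlt']; exact Or.inr ⟨h1, h2⟩
  have hval0 : ∀ x y, lt' x y → pv x < pv y → c'' x y = 0 := by
    intro x y h hp
    rw [hlt'] at h
    rcases h with ⟨h1, _⟩ | ⟨_, h2⟩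
    · exact h1
    · omega
  have hval1 : ∀ x y, lt' x y → pv y < pv x → c'' x y = 1 := by
    intro x y h hp
    rw [hlt'] at h
    rcases h with ⟨_, h2⟩ | ⟨h1, _⟩
    · omega
    · exact h1
  have hconn : ∀ x y, x ≠ y → lt' x y ∨ lt' y x := by
    intro x y hxy
    have hpne : pv x ≠ pv y := fun hh => hxy (hpvinj x y hh)
    rcases St6.zmod2_cases (c'' x y) with h0 | h1
    · rcases Nat.lt_or_ge (pv x) (pv y) with hl | hl
      · exact Or.inl (hmk0 x y h0 hl)
      · exact Or.inr (hmk0 y x (by rw [hc''symm y x]; exact h0) (by omega))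
    · rcases Nat.lt_or_ge (pv y) (pv x) with hl | hl
      · exact Or.inl (hmk1 x y h1 hl)
      · exact Or.inr (hmk1 y x (by rw [hc''symm y x]; exact h1) (by omega))
  have hasym : ∀ x y, lt' x y → lt' y x → False := by
    intro x y h1 h2
    rw [hlt'] at h1 h2
    rw [hc''symm y x] at h2
    rcases h1 with ⟨ha, hb⟩ | ⟨ha, hb⟩ <;> rcases h2 with ⟨hc, hd⟩ | ⟨hc, hd⟩ <;>
      first
        | omega
        | (rw [ha] at hc; exact St6.zmod2_01 hc)
        | (rw [ha] at hc; exact St6.zmod2_10 hc)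
  have htrans : ∀ x y z, lt' x y → lt' y z → lt' x z := by
    intro x y z hxy hyz
    by_cases hxz : x = z
    · exact absurd hyz (fun hh => hasym x y hxy (hxz ▸ hh))
    have hxyne : x ≠ y := fun hh => hirr x (hh ▸ hxy)
    have hyzne : y ≠ z := fun hh => hirr y (hh ▸ hyz)
    have hp1 : pv x ≠ pv y := fun hh => hxyne (hpvinj x y hh)
    have hp2 : pv y ≠ pv z := fun hh => hyzne (hpvinj y z hh)
    have hp3 : pv x ≠ pv z := fun hh => hxz (hpvinj x z hh)
    rcases Nat.lt_or_ge (pv x) (pv y) with o1 | o1 <;>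
      rcases Nat.lt_or_ge (pv y) (pv z) with o2 | o2
    · -- pv x < pv y < pv z
      have d1 := hval0 x y hxy o1
      have d2 := hval0 y z hyz o2
      have d3 := TRI x y z o1 o2 (by rw [d1, d2])
      exact hmk0 x z (by rw [d3, d1]) (by omega)
    · -- pv x < pv y, pv z < pv y
      have d1 := hval0 x y hxy o1
      have d2 := hval1 y z hyz (by omega)
      rcases Nat.lt_or_ge (pv x) (pv z) with o3 | o3
      · -- x < z < y
        have tri := TRI x z y o3 (by omega)
        rcases St6.zmod2_cases (c'' x z) with h0 | h1
        · exact hmk0 x z h0 o3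
        · exfalso
          have := tri (by rw [h1, hc''symm z y, d2])
          rw [d1, h1] at this
          exact St6.zmod2_01 this
      · -- z < x < y
        have tri := TRI z x y (by omega) o1
        rcases St6.zmod2_cases (c'' x z) with h0 | h1
        · exfalso
          have := tri (by rw [hc''symm z x, h0, d1])
          rw [hc''symm z y, d2, hc''symm z x, h0] at this
          exact St6.zmod2_10 this
        · exact hmk1 x z h1 (by omega)
    · -- pv y < pv x, pv y < pv z
      have d1 := hval1 x y hxy (by omega)
      have d2 := hval0 y z hyz o2
      rcases Nat.lt_or_ge (pv x) (pv z) with o3 | o3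
      · -- y < x < z
        have tri := TRI y x z (by omega) o3
        rcases St6.zmod2_cases (c'' x z) with h0 | h1
        · exact hmk0 x z h0 o3
        · exfalso
          have := tri (by rw [hc''symm y x, d1, h1])
          rw [d2, hc''symm y x, d1] at this
          exact St6.zmod2_01 this
      · -- y < z < x
        have tri := TRI y z x o2 (by omega)
        rcases St6.zmod2_cases (c'' x z) with h0 | h1
        · exfalso
          have := tri (by rw [d2, hc''symm z x, h0])
          rw [hc''symm y x, d1, d2] at this
          exact St6.zmod2_10 this
        · exact hmk1 x z h1 (by omega)
    · -- pv z < pv y < pv x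
      have d1 := hval1 x y hxy (by omega)
      have d2 := hval1 y z hyz (by omega)
      have tri := TRI z y x (by omega) (by omega)
      have := tri (by rw [hc''symm z y, d2, hc''symm y x, d1])
      rw [hc''symm z y, d2, hc''symm z x] at this
      exact hmk1 x z this (by omega)
  -- build the target arrangement from lt'
  set K : E → ℕ := fun x => (Finset.univ.filter fun z => lt' z x).card with hK
  have hKlt : ∀ x y, lt' x y → K x < K y := by
    intro x y hxy
    rw [hK]
    apply Finset.card_lt_card
    rw [Finset.ssubset_iff_of_subset]
    · exact ⟨x, by simp only [Finset.mem_filter, Finset.mem_univ, true_and]; exact ⟨hxy, hirr x⟩⟩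
    · intro z hz
      simp only [Finset.mem_filter, Finset.mem_univ, true_and] at hz ⊢
      exact htrans z x y hz hxy
  have hKinj : Function.Injective K := by
    intro x y hxy
    by_contra hne
    rcases hconn x y hne with h | h
    · have := hKlt x y h; omega
    · have := hKlt y x h; omega
  have hKiff : ∀ x y, x ≠ y → ((K x < K y) ↔ lt' x y) := by
    intro x y hne
    constructor
    · intro h
      rcases hconn x y hne with hh | hh
      · exact hh
      · exact absurd (hKlt y x hh) (by omega)
    · exact hKlt x y
  letI LO : LinearOrder E := LinearOrder.lift' K hKinj
  have hLOlt : ∀ x y : E, (LO.lt x y) ↔ K x < K y := fun x y => Iff.rfl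
  have f0 : Fin n ≃o E := monoEquivOfFin E hcard
  set zf : ZMod n ≃ Fin n :=
    ⟨fun i => ⟨i.val, ZMod.val_lt i⟩, fun k => ((k : ℕ) : ZMod n),
      fun i => St6.natCast_val_self i,
      fun k => Fin.ext (ZMod.val_natCast_of_lt k.isLt)⟩ with hzf
  set f : ZMod n ≃ E := zf.trans f0.toEquiv with hf
  have hfsymmval : ∀ x : E, (f.symm x).val = (f0.symm x).val := by
    intro x
    rw [hf]
    simp only [Equiv.symm_trans_apply]
    exact ZMod.val_natCast_of_lt (f0.symm x).isLt
  have hinvf : ∀ x y : E, x ≠ y → St6.invTog re f x y = c'' x y := by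
    intro x y hne
    have hcond : (((f.symm x).val < (f.symm y).val)) ↔ lt' x y := by
      rw [hfsymmval, hfsymmval, ← Fin.lt_def]
      have : (f0.symm x < f0.symm y) ↔ (LO.lt x y) := f0.symm.lt_iff_lt
      rw [this, hLOlt]
      exact hKiff x y hne
    unfold St6.invTog
    have hpvx : (re.symm x).val = pv x := rfl
    have hpvy : (re.symm y).val = pv y := rfl
    rw [hpvx, hpvy]
    simp only [hcond]
    have hpne : pv x ≠ pv y := fun hh => hne (hpvinj x y hh)
    rcases St6.zmod2_cases (c'' x y) with h0 | h1
    · rw [if_pos, h0]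
      constructor
      · exact fun hpp => hmk0 x y h0 hpp
      · intro hl
        rcases Nat.lt_or_ge (pv x) (pv y) with hc | hc
        · exact hc
        · exact absurd (hval1 x y hl (by omega)) (by rw [h0]; exact fun hh => St6.zmod2_01 hh)
    · rw [if_neg, h1]
      intro hiff
      rcases Nat.lt_or_ge (pv x) (pv y) with hc | hc
      · have := hval0 x y (hiff.mp hc) hc
        rw [h1] at this
        exact St6.zmod2_10 this
      · exact absurd (hiff.mpr (hmk1 x y h1 (by omega))) (by omega)
  -- run the flip program
  obtain ⟨k, hk⟩ := hTeven
  have h1 := St6.loops_reach re k T c hk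
  have h2 := St6.sort_reach f (St6.Nbad re f) re
    (fun x y => c x y + St6.tTog T x y) le_rfl
  have htT : ∀ z : E, (if z ∈ T then (1 : ZMod 2) else 0) = t'' z := by
    intro z
    by_cases hz : z ∈ T
    · rw [if_pos hz]
      rw [hT] at hz
      simp only [Finset.mem_filter, Finset.mem_univ, true_and] at hz
      exact hz.symm
    · rw [if_neg hz]
      rw [hT] at hz
      simp only [Finset.mem_filter, Finset.mem_univ, true_and] at hz
      rcases St6.zmod2_cases (t'' z) with h | h
      · exact h.symm
      · exact absurd h hz
  refine ⟨(⇑f, fun x y => (c x y + St6.tTog T x y) + St6.invTog re f x y), ?_, ?_⟩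
  · rw [← hcoe]
    exact h1.trans h2
  · intro x y hxy
    show (c x y + St6.tTog T x y) + St6.invTog re f x y = 0
    rw [hinvf x y hxy]
    unfold St6.tTog
    rw [htT x, htT y]
    have hcd : c'' x y = c x y + t'' x + t'' y := by rw [hc'']
    rw [hcd]
    exact St6.zmod2_final _ _ _
end

section
/- Consider the state on the 4-element set E = {e₁, e₂, e₃, e₄} whose rotation is the cyclic order (e₁, e₂, e₃, e₄) (i.e. r(i) = e_{i+1} for i ∈ ZMod 4) and whose parity function c is zero on every pair except c(e₂, e₄) = c(e₄, e₂) = 1. This state is not evenable: no finite sequence of flips leads to a state whose parity function vanishes on all pairs of distinct elements. -/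
/-- Parity of a position in `ZMod 4`. -/
def par : ZMod 4 →+* ZMod 2 := ZMod.castHom (show 2 ∣ 4 by norm_num) (ZMod 2)

/-- The flip invariant. -/
def FlipInv (s : (ZMod 4 → ZMod 4) × (ZMod 4 → ZMod 4 → ZMod 2)) : Prop :=
  Function.Injective s.1 ∧ (∀ x, s.2 x x = 0) ∧
    ∀ j : ZMod 4, (∑ f : ZMod 4, s.2 (s.1 j) f) + par j = 0

lemma inv_step {s t} (hs : FlipInv s) (h : FlipStep 4 s t) : FlipInv t := by
  obtain ⟨hinj, hdiag, hsum⟩ := hs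
  obtain ⟨i, hr, hc⟩ := h
  have hii : i + 1 ≠ i := by
    intro h
    have h2 : (1 : ZMod 4) = 0 := by linear_combination h
    exact absurd h2 (by decide)
  set a := s.1 i with ha
  set b := s.1 (i + 1) with hb
  have hab : a ≠ b := fun h => hii (hinj h.symm)
  have ht1 : t.1 = s.1 ∘ Equiv.swap i (i + 1) := by
    funext j
    rw [hr j]
    by_cases hj : j = i
    · simp [hj, Equiv.swap_apply_left, hb]
    · by_cases hj' : j = i + 1
      · subst hj'
        rw [if_neg hii, if_pos rfl, Function.comp_apply, Equiv.swap_apply_right]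
      · simp [hj, hj', Equiv.swap_apply_of_ne_of_ne hj hj']
  have htinj : Function.Injective t.1 := by
    rw [ht1]; exact hinj.comp (Equiv.swap i (i + 1)).injective
  have htdiag : ∀ x, t.2 x x = 0 := by
    intro x
    rw [hc x x, if_neg, hdiag]
    rintro (⟨h1, h2⟩ | ⟨h1, h2⟩)
    · exact hab (h1 ▸ h2)
    · exact hab (h2 ▸ h1)
  refine ⟨htinj, htdiag, fun j => ?_⟩
  -- degree computations
  have degb : (∑ f : ZMod 4, t.2 b f) = (∑ f : ZMod 4, s.2 b f) + 1 := by
    have : ∀ f, t.2 b f = s.2 b f + (if f = a then 1 else 0) := by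
      intro f
      rw [hc b f]
      by_cases hf : f = a
      · rw [if_pos (Or.inr ⟨rfl, hf⟩), if_pos hf]
      · rw [if_neg, if_neg hf, add_zero]
        rintro (⟨h1, _⟩ | ⟨_, h2⟩)
        · exact hab h1.symm
        · exact hf h2
    simp only [this, Finset.sum_add_distrib, Finset.sum_ite_eq' Finset.univ a,
      Finset.mem_univ, if_true]
  have dega : (∑ f : ZMod 4, t.2 a f) = (∑ f : ZMod 4, s.2 a f) + 1 := by
    have : ∀ f, t.2 a f = s.2 a f + (if f = b then 1 else 0) := by
      intro f
      rw [hc a f]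
      by_cases hf : f = b
      · rw [if_pos (Or.inl ⟨rfl, hf⟩), if_pos hf]
      · rw [if_neg, if_neg hf, add_zero]
        rintro (⟨_, h2⟩ | ⟨h1, _⟩)
        · exact hf h2
        · exact hab h1
    simp only [this, Finset.sum_add_distrib, Finset.sum_ite_eq' Finset.univ b,
      Finset.mem_univ, if_true]
  have hpar : par (i + 1) = par i + 1 := by rw [map_add, map_one]
  by_cases hj : j = i
  · have h1 : t.1 j = b := by rw [hr j, if_pos hj]
    rw [h1, degb, hj]
    have := hsum (i + 1)
    rw [← hb, hpar] at this
    linear_combination this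
  · by_cases hj' : j = i + 1
    · have h1 : t.1 j = a := by rw [hr j, if_neg hj, if_pos hj']
      rw [h1, dega, hj']
      have := hsum i
      rw [← ha] at this
      have h2 : (1 : ZMod 2) + 1 = 0 := by decide
      linear_combination this + hpar + h2
    · have h1 : t.1 j = s.1 j := by rw [hr j, if_neg hj, if_neg hj']
      have hna : s.1 j ≠ a := fun h => hj (hinj h)
      have hnb : s.1 j ≠ b := fun h => hj' (hinj h)
      have hceq : ∀ f, t.2 (s.1 j) f = s.2 (s.1 j) f := by
        intro f
        rw [hc (s.1 j) f, if_neg]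
        rintro (⟨h1, _⟩ | ⟨h1, _⟩)
        · exact hna h1
        · exact hnb h1
      rw [h1]
      simp only [hceq]
      exact hsum j

lemma inv_rtg {s t} (hs : FlipInv s) (h : Relation.ReflTransGen (FlipStep 4) s t) : FlipInv t := by
  induction h with
  | refl => exact hs
  | tail _ hstep ih => exact inv_step ih hstep

/-- The state on a 4-element set whose rotation is the cyclic order
`(e₁, e₂, e₃, e₄)` and whose parity function is zero except on the interleaved pair
`{e₂, e₄}` is not evenable. Here the 4-element set is `ZMod 4` with `e_{i+1}` sitting at
position `i`, so the rotation is the identity and the odd pair is `{1, 3}`. -/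
theorem statement_7 :
    ¬ Evenable 4 ((id : ZMod 4 → ZMod 4),
      fun x y : ZMod 4 =>
        if (x = 1 ∧ y = 3) ∨ (x = 3 ∧ y = 1) then (1 : ZMod 2) else 0) := by
  rintro ⟨t, hrel, heven⟩
  have hinit : FlipInv ((id : ZMod 4 → ZMod 4),
      fun x y : ZMod 4 =>
        if (x = 1 ∧ y = 3) ∨ (x = 3 ∧ y = 1) then (1 : ZMod 2) else 0) := by
    refine ⟨fun x y h => h, ?_, ?_⟩ <;> decide
  obtain ⟨-, hdiag, hsum⟩ := inv_rtg hinit hrel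
  have h1 := hsum 1
  have hdeg : (∑ f : ZMod 4, t.2 (t.1 1) f) = 0 := by
    rw [Finset.sum_eq_single (t.1 1)]
    · exact hdiag _
    · intro f _ hf
      exact heven _ _ (fun h => hf h.symm)
    · simp
  rw [hdeg, zero_add] at h1
  exact one_ne_zero (show (1 : ZMod 2) = 0 from h1)
end

section
/- Let (r, c) be a state on a finite set E and let e ∈ E be a designated element. Then there is a finite sequence of flips leading from (r, c) to a state (r′, c′) such that c′(e, x) = 0 for every x ∈ E. -/
/-- Concrete flipAt of a state at position `i`. -/
def flipAt (n : ℕ) {E : Type*} [DecidableEq E]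
    (s : (ZMod n → E) × (E → E → ZMod 2)) (i : ZMod n) :
    (ZMod n → E) × (E → E → ZMod 2) :=
  (fun j => if j = i then s.1 (i + 1) else if j = i + 1 then s.1 i else s.1 j,
   fun x y =>
     if (x = s.1 i ∧ y = s.1 (i + 1)) ∨ (x = s.1 (i + 1) ∧ y = s.1 i)
     then s.2 x y + 1 else s.2 x y)

lemma flipStep_flip (n : ℕ) {E : Type*} [DecidableEq E]
    (s : (ZMod n → E) × (E → E → ZMod 2)) (i : ZMod n) :
    FlipStep n s (flipAt n s i) :=
  ⟨i, fun _ => rfl, fun _ _ => rfl⟩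

lemma flip_bijective (n : ℕ) {E : Type*} [DecidableEq E]
    (s : (ZMod n → E) × (E → E → ZMod 2)) (i : ZMod n)
    (h : Function.Bijective s.1) : Function.Bijective (flipAt n s i).1 := by
  have : (flipAt n s i).1 = s.1 ∘ (Equiv.swap i (i + 1)) := by
    funext j
    simp only [flipAt, Function.comp, Equiv.swap_apply_def]
    split_ifs <;> rfl
  rw [this]
  exact h.comp (Equiv.swap i (i + 1)).bijective

lemma toggle {n : ℕ} (hn2 : 2 ≤ n) {E : Type*} [DecidableEq E] :
    ∀ d : ℕ, 1 ≤ d → d < n → ∀ s : (ZMod n → E) × (E → E → ZMod 2),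
    Function.Bijective s.1 → ∀ i : ZMod n,
    ∃ t : (ZMod n → E) × (E → E → ZMod 2),
      Relation.ReflTransGen (FlipStep n) s t ∧ Function.Bijective t.1 ∧
      ∀ y : E, t.2 (s.1 i) y =
        if y = s.1 (i + (d : ZMod n)) then s.2 (s.1 i) y + 1 else s.2 (s.1 i) y := by
  haveI : Fact (1 < n) := ⟨by omega⟩
  intro d
  induction d with
  | zero => omega
  | succ m ih =>
    intro _ hdn s hs i
    rcases Nat.eq_zero_or_pos m with hm0 | hm1
    · -- d = 1 : flip at i
      subst hm0
      refine ⟨flipAt n s i, Relation.ReflTransGen.single (flipStep_flip n s i),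
        flip_bijective n s i hs, ?_⟩
      intro y
      have hne : s.1 i ≠ s.1 (i + 1) := by
        intro h
        have := hs.1 h
        exact one_ne_zero (by linear_combination -this)
      have hd1 : ((0 + 1 : ℕ) : ZMod n) = 1 := by norm_num
      rw [hd1]
      show (if (s.1 i = s.1 i ∧ y = s.1 (i + 1)) ∨ (s.1 i = s.1 (i + 1) ∧ y = s.1 i)
            then s.2 (s.1 i) y + 1 else s.2 (s.1 i) y) = _
      by_cases hy : y = s.1 (i + 1)
      · simp [hy, hne]
      · have hcond : ¬((s.1 i = s.1 i ∧ y = s.1 (i + 1)) ∨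
            (s.1 i = s.1 (i + 1) ∧ y = s.1 i)) := by tauto
        rw [if_neg hcond, if_neg hy]
    · -- d = m + 1 with m ≥ 1 : flip at j = i + m first
      have hmne : ((m : ℕ) : ZMod n) ≠ 0 := by
        rw [Ne, ZMod.natCast_eq_zero_iff]
        intro hdvd
        exact absurd (Nat.le_of_dvd (by omega) hdvd) (by omega)
      have hm1ne : ((m + 1 : ℕ) : ZMod n) ≠ 0 := by
        rw [Ne, ZMod.natCast_eq_zero_iff]
        intro hdvd
        exact absurd (Nat.le_of_dvd (by omega) hdvd) (by omega)
      have hij : i ≠ i + (m : ZMod n) := by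
        intro h
        exact hmne (by linear_combination -h)
      have hij1 : i ≠ i + (m : ZMod n) + 1 := by
        intro h
        apply hm1ne
        push_cast
        linear_combination -h
      set j : ZMod n := i + (m : ZMod n) with hj
      set s' := flipAt n s j with hs'
      have hstep : FlipStep n s s' := flipStep_flip n s j
      have hs'b : Function.Bijective s'.1 := flip_bijective n s j hs
      have h1i : s'.1 i = s.1 i := by
        show (if i = j then _ else if i = j + 1 then _ else s.1 i) = s.1 i
        rw [if_neg hij, if_neg hij1]
      have h1x : s'.1 (i + (m : ZMod n)) = s.1 (i + ((m + 1 : ℕ) : ZMod n)) := by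
        have hjj : i + ((m + 1 : ℕ) : ZMod n) = j + 1 := by
          rw [hj]; push_cast; ring
        rw [hjj]
        show (if i + (m : ZMod n) = j then s.1 (j + 1) else _) = s.1 (j + 1)
        rw [if_pos hj.symm]
      have h2 : ∀ y, s'.2 (s.1 i) y = s.2 (s.1 i) y := by
        intro y
        show (if (s.1 i = s.1 j ∧ _) ∨ (s.1 i = s.1 (j + 1) ∧ _) then _ else _) = _
        rw [if_neg]
        rintro (⟨h, -⟩ | ⟨h, -⟩)
        · exact hij (hs.1 h)
        · exact hij1 (hs.1 h)
      obtain ⟨t, htr, htb, hty⟩ := ih hm1 (by omega) s' hs'b i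
      refine ⟨t, Relation.ReflTransGen.head hstep htr, htb, ?_⟩
      intro y
      have := hty y
      rw [h1i, h1x, h2] at this
      exact this

lemma zmod2_ne_one {a : ZMod 2} (h : a ≠ 1) : a = 0 := by
  revert h; revert a; decide

lemma main_aux {n : ℕ} (hn2 : 2 ≤ n) {E : Type*} [DecidableEq E] [Fintype E] (e : E) :
    ∀ N : ℕ, ∀ s : (ZMod n → E) × (E → E → ZMod 2),
    Function.Bijective s.1 → s.2 e e = 0 →
    (Finset.univ.filter (fun x => s.2 e x = 1)).card ≤ N →
    ∃ t : (ZMod n → E) × (E → E → ZMod 2),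
      Relation.ReflTransGen (FlipStep n) s t ∧ ∀ x : E, t.2 e x = 0 := by
  haveI : Fact (1 < n) := ⟨by omega⟩
  haveI : NeZero n := ⟨by omega⟩
  intro N
  induction N with
  | zero =>
    intro s hs hee hcard
    refine ⟨s, Relation.ReflTransGen.refl, ?_⟩
    intro x
    rcases eq_or_ne x e with rfl | hx
    · exact hee
    · apply zmod2_ne_one
      intro h1
      have : x ∈ Finset.univ.filter (fun y => s.2 e y = 1) := by
        simp [h1]
      rw [Finset.card_eq_zero.mp (Nat.le_zero.mp hcard)] at this
      exact absurd this (Finset.notMem_empty x)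
  | succ N ih =>
    intro s hs hee hcard
    by_cases hempty : (Finset.univ.filter (fun x => s.2 e x = 1)).card = 0
    · exact ih s hs hee (by omega)
    · obtain ⟨x, hx⟩ := Finset.card_pos.mp (Nat.pos_of_ne_zero hempty)
      have hx1 : s.2 e x = 1 := by
        simpa using (Finset.mem_filter.mp hx).2
      have hxe : x ≠ e := by
        intro h; rw [h, hee] at hx1; exact absurd hx1 (by decide)
      obtain ⟨i, hi⟩ := hs.2 e
      obtain ⟨k, hk⟩ := hs.2 x
      have hki : k ≠ i := by
        intro h; rw [h, hi] at hk; exact hxe hk.symm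
      set d : ℕ := (k - i).val with hd
      have hdne : k - i ≠ 0 := fun h => hki (by linear_combination h)
      have hd1 : 1 ≤ d := by
        rcases Nat.eq_zero_or_pos d with h0 | h1
        · exact absurd ((ZMod.val_eq_zero _).mp h0) hdne
        · exact h1
      have hdn : d < n := ZMod.val_lt _
      have hcast : ((d : ℕ) : ZMod n) = k - i := by
        rw [hd, ZMod.natCast_val, ZMod.cast_id]
      have hik : i + ((d : ℕ) : ZMod n) = k := by rw [hcast]; ring
      obtain ⟨t, htr, htb, hty⟩ := toggle hn2 d hd1 hdn s hs i
      rw [hi] at hty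
      rw [hik, hk] at hty
      have htee : t.2 e e = 0 := by
        rw [hty e, if_neg (Ne.symm hxe)]
        exact hee
      have hfilter : (Finset.univ.filter (fun y => t.2 e y = 1)) =
          (Finset.univ.filter (fun y => s.2 e y = 1)).erase x := by
        ext y
        simp only [Finset.mem_filter, Finset.mem_univ, true_and, Finset.mem_erase]
        rcases eq_or_ne y x with rfl | hyx
        · rw [hty y, if_pos rfl, hx1]
          simp
        · rw [hty y, if_neg hyx]
          simp [hyx]
      have hcard' : (Finset.univ.filter (fun y => t.2 e y = 1)).card ≤ N := by
        rw [hfilter, Finset.card_erase_of_mem hx]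
        omega
      obtain ⟨u, hur, hu⟩ := ih t htb htee hcard'
      exact ⟨u, htr.trans hur, hu⟩

/-- From any state `(r, c)` on a finite set `E` with a designated element `e`,
some finite sequence of flips reaches a state `(r′, c′)` with `c′ e x = 0` for all `x`. -/
theorem statement_8 {n : ℕ} (hn : 1 ≤ n) {E : Type*} [DecidableEq E] [Fintype E]
    (hcard : Fintype.card E = n)
    (r : ZMod n → E) (hr : Function.Bijective r)
    (c : E → E → ZMod 2) (hsymm : ∀ x y : E, c x y = c y x) (hdiag : ∀ x : E, c x x = 0)
    (e : E) :
    ∃ t : (ZMod n → E) × (E → E → ZMod 2),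
      Relation.ReflTransGen (FlipStep n) (r, c) t ∧ ∀ x : E, t.2 e x = 0 := by
  rcases Nat.lt_or_ge n 2 with h1 | hn2
  · -- n = 1 : E is a singleton
    refine ⟨(r, c), Relation.ReflTransGen.refl, ?_⟩
    intro x
    have hc1 : Fintype.card E = 1 := by omega
    obtain ⟨a, ha⟩ := Fintype.card_eq_one_iff.mp hc1
    have : x = e := (ha x).trans (ha e).symm
    rw [this]
    exact hdiag e
  · exact main_aux hn2 e (Finset.univ.filter (fun x => c e x = 1)).card (r, c) hr
      (hdiag e) le_rfl
end

section
/- Every state on a finite set E with |E| ≤ 3 is evenable: for n ≤ 3, from any state on an n-element set some finite sequence of flips reaches a state whose parity function vanishes on all pairs of distinct elements. -/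
private lemma zmod2_toggle : ∀ v : ZMod 2, v ≠ 0 → v + 1 = 0 := by decide

/-- Flipping at an adjacent position whose endpoints are `x`, `y`. -/
private lemma step_core {n : ℕ} {E : Type*} [DecidableEq E]
    (r : ZMod n → E) (c : E → E → ZMod 2) (hb : Function.Bijective r)
    (hs : ∀ u v, c u v = c v u) {i : ZMod n} {x y : E}
    (hix : r i = x) (hiy : r (i + 1) = y) (h0 : c x y ≠ 0) :
    ∃ t, FlipStep n (r, c) t ∧ Function.Bijective t.1 ∧
      (∀ u v, t.2 u v = t.2 v u) ∧ t.2 x y = 0 ∧ t.2 y x = 0 ∧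
      (∀ u v, ¬((u = x ∧ v = y) ∨ (u = y ∧ v = x)) → t.2 u v = c u v) := by
  refine ⟨(r ∘ Equiv.swap i (i + 1),
      fun u v => if (u = x ∧ v = y) ∨ (u = y ∧ v = x) then c u v + 1 else c u v),
      ⟨i, fun j => ?_, fun u v => by simp only [hix, hiy]⟩, ?_, ?_, ?_, ?_, ?_⟩
  · simp only [Function.comp_apply, Equiv.swap_apply_def]
    split_ifs <;> rfl
  · exact hb.comp (Equiv.swap i (i + 1)).bijective
  · intro u v
    show (if (u = x ∧ v = y) ∨ (u = y ∧ v = x) then c u v + 1 else c u v) =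
      (if (v = x ∧ u = y) ∨ (v = y ∧ u = x) then c v u + 1 else c v u)
    rw [hs u v]
    exact if_congr (by tauto) rfl rfl
  · show (if (x = x ∧ y = y) ∨ (x = y ∧ y = x) then c x y + 1 else c x y) = 0
    rw [if_pos (Or.inl ⟨rfl, rfl⟩)]
    exact zmod2_toggle _ h0
  · show (if (y = x ∧ x = y) ∨ (y = y ∧ x = x) then c y x + 1 else c y x) = 0
    rw [if_pos (Or.inr ⟨rfl, rfl⟩), hs y x]
    exact zmod2_toggle _ h0
  · intro u v huv
    show (if (u = x ∧ v = y) ∨ (u = y ∧ v = x) then c u v + 1 else c u v) = c u v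
    rw [if_neg huv]

/-- One conditional toggle: reach a state where the pair `x, y` has zero parity and
all other pairs are unchanged. -/
private lemma step_lemma {n : ℕ} {E : Type*} [DecidableEq E]
    (hadj : ∀ i j : ZMod n, i ≠ j → j = i + 1 ∨ i = j + 1)
    (r : ZMod n → E) (c : E → E → ZMod 2) (hb : Function.Bijective r)
    (hs : ∀ u v, c u v = c v u) (x y : E) (hxy : x ≠ y) :
    ∃ t, Relation.ReflTransGen (FlipStep n) (r, c) t ∧ Function.Bijective t.1 ∧
      (∀ u v, t.2 u v = t.2 v u) ∧ t.2 x y = 0 ∧ t.2 y x = 0 ∧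
      (∀ u v, ¬((u = x ∧ v = y) ∨ (u = y ∧ v = x)) → t.2 u v = c u v) := by
  by_cases h0 : c x y = 0
  · exact ⟨(r, c), .refl, hb, hs, h0, (hs y x).trans h0, fun _ _ _ => rfl⟩
  · obtain ⟨i, hix⟩ := hb.2 x
    obtain ⟨j, hjy⟩ := hb.2 y
    have hij : i ≠ j := fun h => hxy (by rw [← hix, ← hjy, h])
    rcases hadj i j hij with h | h
    · obtain ⟨t, hf, hbt, hst, hxy0, hyx0, hu⟩ :=
        step_core r c hb hs hix (h ▸ hjy) h0
      exact ⟨t, .single hf, hbt, hst, hxy0, hyx0, hu⟩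
    · obtain ⟨t, hf, hbt, hst, hyx0, hxy0, hu⟩ :=
        step_core r c hb hs hjy (h ▸ hix) (fun hc => h0 ((hs x y).trans hc))
      exact ⟨t, .single hf, hbt, hst, hxy0, hyx0, fun u v huv => hu u v (by tauto)⟩

/-- Every state on a finite set with at most 3 elements is evenable. -/
theorem statement_9 {n : ℕ} (hn1 : 1 ≤ n) (hn3 : n ≤ 3) {E : Type*} [DecidableEq E]
    [Fintype E] (hcard : Fintype.card E = n)
    (r : ZMod n → E) (hr : Function.Bijective r)
    (c : E → E → ZMod 2) (hsymm : ∀ x y : E, c x y = c y x) (hdiag : ∀ x : E, c x x = 0) :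
    Evenable n (r, c) := by
  interval_cases n
  · -- n = 1
    refine ⟨(r, c), .refl, fun x y hxy => absurd ?_ hxy⟩
    exact Fintype.card_le_one_iff.mp (by omega) x y
  · -- n = 2
    have hadj : ∀ i j : ZMod 2, i ≠ j → j = i + 1 ∨ i = j + 1 := by decide
    have hab : r 0 ≠ r 1 := fun h => absurd (hr.1 h) (by decide)
    have mem : ∀ x : E, x = r 0 ∨ x = r 1 := by
      intro x
      obtain ⟨i, hi⟩ := hr.2 x
      rcases (by decide : ∀ i : ZMod 2, i = 0 ∨ i = 1) i with h | h <;> subst h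
      · exact Or.inl hi.symm
      · exact Or.inr hi.symm
    obtain ⟨t, hst, hbt, hstm, hxy0, hyx0, hu⟩ :=
      step_lemma hadj r c hr hsymm (r 0) (r 1) hab
    refine ⟨t, hst, fun x y hxy => ?_⟩
    rcases mem x with rfl | rfl <;> rcases mem y with rfl | rfl <;>
      first
        | exact absurd rfl hxy
        | assumption
  · -- n = 3
    have hadj : ∀ i j : ZMod 3, i ≠ j → j = i + 1 ∨ i = j + 1 := by decide
    have hab : r 0 ≠ r 1 := fun h => absurd (hr.1 h) (by decide)
    have hbd : r 1 ≠ r 2 := fun h => absurd (hr.1 h) (by decide)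
    have had : r 0 ≠ r 2 := fun h => absurd (hr.1 h) (by decide)
    have mem : ∀ x : E, x = r 0 ∨ x = r 1 ∨ x = r 2 := by
      intro x
      obtain ⟨i, hi⟩ := hr.2 x
      rcases (by decide : ∀ i : ZMod 3, i = 0 ∨ i = 1 ∨ i = 2) i with h | h | h <;> subst h
      · exact Or.inl hi.symm
      · exact Or.inr (Or.inl hi.symm)
      · exact Or.inr (Or.inr hi.symm)
    obtain ⟨t1, hst1, hb1, hs1, h1ab, h1ba, h1u⟩ :=
      step_lemma hadj r c hr hsymm (r 0) (r 1) hab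
    obtain ⟨t2, hst2, hb2, hs2, h2bd, h2db, h2u⟩ :=
      step_lemma hadj t1.1 t1.2 hb1 hs1 (r 1) (r 2) hbd
    obtain ⟨t3, hst3, hb3, hs3, h3ad, h3da, h3u⟩ :=
      step_lemma hadj t2.1 t2.2 hb2 hs2 (r 0) (r 2) had
    rw [Prod.mk.eta] at hst2 hst3
    have e_ab : t3.2 (r 0) (r 1) = 0 := by
      rw [h3u _ _ (by rintro (⟨-, h⟩ | ⟨h, -⟩); exacts [hbd h, had h]),
        h2u _ _ (by rintro (⟨h, -⟩ | ⟨h, -⟩); exacts [hab h, had h])]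
      exact h1ab
    have e_ba : t3.2 (r 1) (r 0) = 0 := (hs3 _ _).trans e_ab
    have e_bd : t3.2 (r 1) (r 2) = 0 := by
      rw [h3u _ _ (by rintro (⟨h, -⟩ | ⟨-, h⟩); exacts [hab h.symm, had h.symm])]
      exact h2bd
    have e_db : t3.2 (r 2) (r 1) = 0 := (hs3 _ _).trans e_bd
    have e_da : t3.2 (r 2) (r 0) = 0 := (hs3 _ _).trans h3ad
    refine ⟨t3, hst1.trans (hst2.trans hst3), fun x y hxy => ?_⟩
    rcases mem x with rfl | rfl | rfl <;> rcases mem y with rfl | rfl | rfl <;>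
      first
        | exact absurd rfl hxy
        | assumption
end
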